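/- arXiv:1510.05137 — 7 statements merged into one kernel-verified Lean document; each statement's English description precedes it below -/
import Mathlib

section
/- Let d ≥ 1, N ≥ 2, M ≥ 1 be integers, let r be an integer with 1 ≤ r ≤ N − 1, set ρ = r/N, and let ε ∈ (0,1]. Under the uniform probability measure on functions f : [M] → ([N])^d (each right vertex picks d random left neighbors independently with replacement), the probability that there exists a subset S ⊆ [N] with |S| = r such that the number of j ∈ [M] with f(j)(t) ∉ S for all t ∈ [d] exceeds (1+ε)(1−ρ)^d · M is at most 2^N · exp(−ε²(1−ρ)^d M / 3). In particular, if M is sufficiently large compared to N, with high probability every subset S ⊆ [N] of size r has at least (1 − (1+ε)(1−ρ)^d)M distinct neighbors. -/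
open Finset

private lemma chernoff_exp_aux {ε : ℝ} (hε0 : 0 < ε) (hε1 : ε ≤ 1) :
    Real.exp (2 * ε / 3) - 1 - (2 * ε / 3) * (1 + ε) ≤ -(ε ^ 2 / 3) := by
  have ht0 : (0:ℝ) ≤ 2 * ε / 3 := by linarith
  have ht1 : 2 * ε / 3 ≤ 1 := by linarith
  have h := Real.exp_bound' ht0 ht1 (n := 3) (by norm_num)
  have hsum : (∑ m ∈ Finset.range 3, (2*ε/3) ^ m / m.factorial) = 1 + 2*ε/3 + (2*ε/3)^2/2 := by
    simp [Finset.sum_range_succ, Nat.factorial]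
  rw [hsum] at h
  norm_num [Nat.factorial] at h
  have h3 : ε ^ 3 ≤ ε ^ 2 := pow_le_pow_of_le_one hε0.le hε1 (by norm_num)
  nlinarith [sq_nonneg ε]

private lemma perS (d M : ℕ) {N r : ℕ} (hN : 0 < N) (hrN : r ≤ N)
    {ε : ℝ} (hε0 : 0 < ε) (hε1 : ε ≤ 1)
    (S : Finset (Fin N)) (hS : S.card = r) :
    ((univ.filter (fun f : Fin M → Fin d → Fin N =>
        (1 + ε) * (1 - (r:ℝ)/N) ^ d * M <
          ((univ.filter (fun j => ∀ i, f j i ∉ S)).card : ℝ))).card : ℝ)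
      ≤ (Fintype.card (Fin M → Fin d → Fin N) : ℝ) *
          Real.exp (-(ε ^ 2 * (1 - (r:ℝ)/N) ^ d * M / 3)) := by
  set p : ℝ := (1 - (r:ℝ)/N) ^ d with hp
  set c : ℝ := Real.exp (2 * ε / 3) with hc
  have hNpos : (0:ℝ) < N := by exact_mod_cast hN
  have hfrac0 : (0:ℝ) ≤ 1 - (r:ℝ)/N := by
    rw [sub_nonneg, div_le_one hNpos]; exact_mod_cast hrN
  have hp0 : 0 ≤ p := pow_nonneg hfrac0 d
  have ht0 : (0:ℝ) < 2 * ε / 3 := by linarith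
  have hc1 : 1 ≤ c := Real.one_le_exp ht0.le
  -- the weight function
  set w : (Fin d → Fin N) → ℝ := fun v => if ∀ i, v i ∉ S then c else 1 with hw
  -- count of avoiding vectors
  have hScard : (Sᶜ.card : ℝ) = (N:ℝ) - r := by
    rw [Finset.card_compl, hS]
    have : r ≤ Fintype.card (Fin N) := by simpa using hrN
    push_cast [Nat.cast_sub this]
    simp
  have hfiltercard : ((univ.filter (fun v : Fin d → Fin N => ∀ i, v i ∉ S)).card : ℝ)
      = p * (N:ℝ)^d := by
    have hfil : univ.filter (fun v : Fin d → Fin N => ∀ i, v i ∉ S)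
        = Fintype.piFinset (fun _ : Fin d => Sᶜ) := by
      ext v; simp [Fintype.mem_piFinset]
    rw [hfil, Fintype.card_piFinset]
    push_cast
    rw [Finset.prod_const, Finset.card_univ, Fintype.card_fin, hScard, hp]
    rw [← mul_pow]
    congr 1
    field_simp
  -- sum of weights
  have hsumw : (∑ v : Fin d → Fin N, w v) = (N:ℝ)^d * (1 + p * (c - 1)) := by
    rw [hw]
    rw [Finset.sum_ite, Finset.sum_const, Finset.sum_const, nsmul_eq_mul, nsmul_eq_mul]
    have hcards : ((univ.filter (fun v : Fin d → Fin N => ∀ i, v i ∉ S)).card : ℝ)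
        + ((univ.filter (fun v : Fin d → Fin N => ¬ ∀ i, v i ∉ S)).card : ℝ) = (N:ℝ)^d := by
      have := Finset.card_filter_add_card_filter_not
        (s := (univ : Finset (Fin d → Fin N))) (p := fun v => ∀ i, v i ∉ S)
      have h2 : (univ : Finset (Fin d → Fin N)).card = N ^ d := by
        simp [Finset.card_univ]
      rw [h2] at this
      exact_mod_cast this
    rw [hfiltercard] at hcards ⊢
    nlinarith [hcards]
  -- product of weights = c ^ (number of non-neighbors)
  have hprod : ∀ f : Fin M → Fin d → Fin N,
      (∏ j : Fin M, w (f j)) = Real.exp ((2*ε/3) *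
        ((univ.filter (fun j : Fin M => ∀ i, f j i ∉ S)).card : ℝ)) := by
    intro f
    rw [hw]
    simp only []
    rw [Finset.prod_ite, Finset.prod_const, Finset.prod_const, one_pow, mul_one, hc,
      ← Real.exp_nat_mul, mul_comm]
  -- factorization of the total sum
  have hfact : (∑ f : Fin M → Fin d → Fin N, ∏ j : Fin M, w (f j))
      = (∑ v : Fin d → Fin N, w v) ^ M := by
    have := Finset.prod_univ_sum (fun _ : Fin M => (univ : Finset (Fin d → Fin N)))
      (fun _ v => w v)
    simp only [Fintype.piFinset_univ] at this
    rw [← this, Finset.prod_const, Finset.card_univ, Fintype.card_fin]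
  set B := univ.filter (fun f : Fin M → Fin d → Fin N =>
      (1 + ε) * p * M < ((univ.filter (fun j => ∀ i, f j i ∉ S)).card : ℝ)) with hB
  have hstep1 : (B.card : ℝ) * Real.exp ((2*ε/3) * ((1 + ε) * p * M))
      ≤ (∑ v : Fin d → Fin N, w v) ^ M := by
    calc (B.card : ℝ) * Real.exp ((2*ε/3) * ((1 + ε) * p * M))
        = ∑ _f ∈ B, Real.exp ((2*ε/3) * ((1 + ε) * p * M)) := by
          rw [Finset.sum_const, nsmul_eq_mul]
      _ ≤ ∑ f ∈ B, Real.exp ((2*ε/3) *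
            ((univ.filter (fun j : Fin M => ∀ i, f j i ∉ S)).card : ℝ)) := by
          refine Finset.sum_le_sum fun f hf => ?_
          have hfB := (Finset.mem_filter.mp hf).2
          exact Real.exp_le_exp.mpr (mul_le_mul_of_nonneg_left hfB.le ht0.le)
      _ ≤ ∑ f : Fin M → Fin d → Fin N, Real.exp ((2*ε/3) *
            ((univ.filter (fun j : Fin M => ∀ i, f j i ∉ S)).card : ℝ)) := by
          exact Finset.sum_le_sum_of_subset_of_nonneg (Finset.filter_subset _ _)
            (fun f _ _ => (Real.exp_pos _).le)
      _ = ∑ f : Fin M → Fin d → Fin N, ∏ j : Fin M, w (f j) := by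
          exact Finset.sum_congr rfl fun f _ => (hprod f).symm
      _ = (∑ v : Fin d → Fin N, w v) ^ M := hfact
  have hsumw_le : (∑ v : Fin d → Fin N, w v) ^ M
      ≤ ((N:ℝ)^d) ^ M * Real.exp (p * (c - 1) * M) := by
    rw [hsumw, mul_pow]
    refine mul_le_mul_of_nonneg_left ?_ (by positivity)
    have hb0 : (0:ℝ) ≤ 1 + p * (c - 1) := by nlinarith
    have hle : 1 + p * (c - 1) ≤ Real.exp (p * (c - 1)) := by
      have := Real.add_one_le_exp (p * (c - 1))
      linarith
    calc (1 + p * (c - 1)) ^ M ≤ Real.exp (p * (c - 1)) ^ M :=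
          pow_le_pow_left₀ hb0 hle M
      _ = Real.exp (p * (c - 1) * M) := by
          rw [← Real.exp_nat_mul, mul_comm]
  have hcard : (Fintype.card (Fin M → Fin d → Fin N) : ℝ) = ((N:ℝ)^d) ^ M := by
    rw [Fintype.card_fun]
    push_cast
    simp
  have hexp_pos : (0:ℝ) < Real.exp ((2*ε/3) * ((1 + ε) * p * M)) := Real.exp_pos _
  have hBle : (B.card : ℝ) ≤ ((N:ℝ)^d) ^ M *
      Real.exp (p * (c - 1) * M - (2*ε/3) * ((1 + ε) * p * M)) := by
    have h1 : (B.card : ℝ) ≤ (((N:ℝ)^d) ^ M * Real.exp (p * (c - 1) * M)) /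
        Real.exp ((2*ε/3) * ((1 + ε) * p * M)) :=
      (le_div_iff₀ hexp_pos).mpr (hstep1.trans hsumw_le)
    rw [div_eq_mul_inv, ← Real.exp_neg, mul_assoc, ← Real.exp_add] at h1
    have heq : p * (c - 1) * M - (2*ε/3) * ((1 + ε) * p * M)
        = p * (c - 1) * M + -((2*ε/3) * ((1 + ε) * p * M)) := by ring
    rw [heq]
    exact h1
  have hfinal : p * (c - 1) * M - (2*ε/3) * ((1 + ε) * p * M)
      ≤ -(ε ^ 2 * p * M / 3) := by
    have h := chernoff_exp_aux hε0 hε1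
    have hpM : (0:ℝ) ≤ p * M := by positivity
    nlinarith [mul_le_mul_of_nonneg_right h hpM]
  have hlast : (B.card : ℝ) ≤ (Fintype.card (Fin M → Fin d → Fin N) : ℝ) *
      Real.exp (-(ε ^ 2 * p * M / 3)) := by
    calc (B.card : ℝ) ≤ ((N:ℝ)^d) ^ M *
        Real.exp (p * (c - 1) * M - (2*ε/3) * ((1 + ε) * p * M)) := hBle
      _ ≤ ((N:ℝ)^d) ^ M * Real.exp (-(ε ^ 2 * p * M / 3)) := by
          exact mul_le_mul_of_nonneg_left (Real.exp_le_exp.mpr hfinal) (by positivity)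
      _ = (Fintype.card (Fin M → Fin d → Fin N) : ℝ) *
          Real.exp (-(ε ^ 2 * p * M / 3)) := by rw [hcard]
  exact hlast

/-- In the random bipartite graph model where each right vertex `j ∈ [M]` picks `d`
uniformly random left neighbors with replacement, the probability that some `r`-subset
`S ⊆ [N]` has more than `(1+ε)(1-ρ)^d·M` non-neighbors in `[M]` (where `ρ = r/N`)
is at most `2^N·exp(-ε²(1-ρ)^d·M/3)`. -/
theorem stmt_1 (d N M r : ℕ) (hd : 1 ≤ d) (hN : 2 ≤ N) (hM : 1 ≤ M)
    (hr1 : 1 ≤ r) (hrN : r ≤ N - 1) (ε : ℝ) (hε0 : 0 < ε) (hε1 : ε ≤ 1) :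
    (({f : Fin M → Fin d → Fin N | ∃ S : Finset (Fin N), S.card = r ∧
        (1 + ε) * (1 - (r : ℝ) / N) ^ d * M <
          ({j : Fin M | ∀ t : Fin d, f j t ∉ S}.ncard : ℝ)}.ncard : ℝ) /
        (Fintype.card (Fin M → Fin d → Fin N) : ℝ))
      ≤ 2 ^ N * Real.exp (-(ε ^ 2 * (1 - (r : ℝ) / N) ^ d * M / 3)) := by
  classical
  have hNpos : 0 < N := by omega
  have hrN' : r ≤ N := by omega
  have hinner : ∀ (f : Fin M → Fin d → Fin N) (S : Finset (Fin N)),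
      ({j : Fin M | ∀ t : Fin d, f j t ∉ S}.ncard)
        = (univ.filter (fun j => ∀ i : Fin d, f j i ∉ S)).card := by
    intro f S
    rw [Set.ncard_eq_toFinset_card', Set.toFinset_setOf]
  have hset : ({f : Fin M → Fin d → Fin N | ∃ S : Finset (Fin N), S.card = r ∧
        (1 + ε) * (1 - (r : ℝ) / N) ^ d * M <
          ({j : Fin M | ∀ t : Fin d, f j t ∉ S}.ncard : ℝ)}.ncard : ℕ)
      = (univ.filter (fun f : Fin M → Fin d → Fin N => ∃ S : Finset (Fin N), S.card = r ∧
        (1 + ε) * (1 - (r : ℝ) / N) ^ d * M <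
          ((univ.filter (fun j => ∀ i : Fin d, f j i ∉ S)).card : ℝ))).card := by
    rw [Set.ncard_eq_toFinset_card', Set.toFinset_setOf]
    congr 1
    apply Finset.filter_congr
    intro f _
    simp only [hinner]
  rw [hset]
  set T : ℝ := (Fintype.card (Fin M → Fin d → Fin N) : ℝ) with hT
  have hTpos : (0:ℝ) < T := by
    have : Nonempty (Fin M → Fin d → Fin N) := ⟨fun _ _ => ⟨0, hNpos⟩⟩
    rw [hT]
    exact_mod_cast Fintype.card_pos
  set E : ℝ := Real.exp (-(ε ^ 2 * (1 - (r : ℝ) / N) ^ d * M / 3)) with hE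
  have hsub : (univ.filter (fun f : Fin M → Fin d → Fin N => ∃ S : Finset (Fin N), S.card = r ∧
        (1 + ε) * (1 - (r : ℝ) / N) ^ d * M <
          ((univ.filter (fun j => ∀ i : Fin d, f j i ∉ S)).card : ℝ)))
      ⊆ (powersetCard r (univ : Finset (Fin N))).biUnion (fun S =>
          univ.filter (fun f : Fin M → Fin d → Fin N =>
            (1 + ε) * (1 - (r:ℝ)/N) ^ d * M <
              ((univ.filter (fun j => ∀ i, f j i ∉ S)).card : ℝ))) := by
    intro f hf
    obtain ⟨S, hSr, hlt⟩ := (Finset.mem_filter.mp hf).2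
    exact Finset.mem_biUnion.mpr ⟨S, Finset.mem_powersetCard.mpr ⟨Finset.subset_univ _, hSr⟩,
      Finset.mem_filter.mpr ⟨Finset.mem_univ _, hlt⟩⟩
  have hcount : ((univ.filter (fun f : Fin M → Fin d → Fin N => ∃ S : Finset (Fin N), S.card = r ∧
        (1 + ε) * (1 - (r : ℝ) / N) ^ d * M <
          ((univ.filter (fun j => ∀ i : Fin d, f j i ∉ S)).card : ℝ))).card : ℝ)
      ≤ (2:ℝ) ^ N * (T * E) := by
    have h1 := Finset.card_le_card hsub
    have h2 := Finset.card_biUnion_le (s := powersetCard r (univ : Finset (Fin N)))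
      (t := fun S => univ.filter (fun f : Fin M → Fin d → Fin N =>
            (1 + ε) * (1 - (r:ℝ)/N) ^ d * M <
              ((univ.filter (fun j => ∀ i, f j i ∉ S)).card : ℝ)))
    have h3 : ((∑ S ∈ powersetCard r (univ : Finset (Fin N)),
        (univ.filter (fun f : Fin M → Fin d → Fin N =>
            (1 + ε) * (1 - (r:ℝ)/N) ^ d * M <
              ((univ.filter (fun j => ∀ i, f j i ∉ S)).card : ℝ))).card : ℕ) : ℝ)
        ≤ ((powersetCard r (univ : Finset (Fin N))).card : ℝ) * (T * E) := by
      push_cast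
      calc (∑ S ∈ powersetCard r (univ : Finset (Fin N)),
          ((univ.filter (fun f : Fin M → Fin d → Fin N =>
            (1 + ε) * (1 - (r:ℝ)/N) ^ d * M <
              ((univ.filter (fun j => ∀ i, f j i ∉ S)).card : ℝ))).card : ℝ))
          ≤ ∑ S ∈ powersetCard r (univ : Finset (Fin N)), T * E := by
            refine Finset.sum_le_sum fun S hS => ?_
            exact perS d M hNpos hrN' hε0 hε1 S (Finset.mem_powersetCard.mp hS).2
        _ = ((powersetCard r (univ : Finset (Fin N))).card : ℝ) * (T * E) := by
            rw [Finset.sum_const, nsmul_eq_mul]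
    have h4 : ((powersetCard r (univ : Finset (Fin N))).card : ℝ) ≤ (2:ℝ) ^ N := by
      rw [Finset.card_powersetCard]
      have h5 : (Finset.univ : Finset (Fin N)).card.choose r ≤ 2 ^ N := by
        rw [Finset.card_univ, Fintype.card_fin, ← Nat.sum_range_choose N]
        exact Finset.single_le_sum (fun m _ => Nat.zero_le _)
          (Finset.mem_range.mpr (Nat.lt_succ_of_le hrN'))
      exact_mod_cast h5
    have hTE : (0:ℝ) ≤ T * E := by positivity
    calc ((univ.filter (fun f : Fin M → Fin d → Fin N => ∃ S : Finset (Fin N), S.card = r ∧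
        (1 + ε) * (1 - (r : ℝ) / N) ^ d * M <
          ((univ.filter (fun j => ∀ i : Fin d, f j i ∉ S)).card : ℝ))).card : ℝ)
        ≤ ((∑ S ∈ powersetCard r (univ : Finset (Fin N)),
        (univ.filter (fun f : Fin M → Fin d → Fin N =>
            (1 + ε) * (1 - (r:ℝ)/N) ^ d * M <
              ((univ.filter (fun j => ∀ i, f j i ∉ S)).card : ℝ))).card : ℕ) : ℝ) := by
          exact_mod_cast le_trans h1 h2
      _ ≤ ((powersetCard r (univ : Finset (Fin N))).card : ℝ) * (T * E) := h3
      _ ≤ (2:ℝ) ^ N * (T * E) := mul_le_mul_of_nonneg_right h4 hTE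
  rw [div_le_iff₀ hTpos]
  calc ((univ.filter (fun f : Fin M → Fin d → Fin N => ∃ S : Finset (Fin N), S.card = r ∧
        (1 + ε) * (1 - (r : ℝ) / N) ^ d * M <
          ((univ.filter (fun j => ∀ i : Fin d, f j i ∉ S)).card : ℝ))).card : ℝ)
      ≤ (2:ℝ) ^ N * (T * E) := hcount
    _ = 2 ^ N * E * T := by ring
end

section
/- Let F be a finite field with q elements and let A ⊆ F∖{0} be any set of nonzero elements. Then the number of pairs (t, s) ∈ F × F such that α·t + α²·s ≠ 1 for every α ∈ A equals q² − |A|·q + |A|(|A|−1)/2. In particular, for A = F∖{0} (so |A| = q−1) this number equals (q² − q + 2)/2, so the uniform distribution on the codewords (α·t + α²·s)_{α ∈ F∖{0}} stays in the (q−1)-element subset F∖{1} with probability exactly (q² − q + 2)/(2q²). -/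
open Finset

private lemma pair_sol {F : Type} [Field F] {α β t s : F} (hα : α ≠ 0) (hβ : β ≠ 0)
    (hne : α ≠ β) (h1 : α*t+α^2*s = 1) (h2 : β*t+β^2*s = 1) :
    α * β * s = -1 ∧ t = α⁻¹ + β⁻¹ := by
  have hs : α * β * s = -1 := by
    have h3 : (α - β) * (α*β*s) = (α - β) * (-1) := by linear_combination β*h1 - α*h2
    exact mul_left_cancel₀ (sub_ne_zero.mpr hne) h3
  refine ⟨hs, ?_⟩
  have ht : α*β*t = α + β := by linear_combination β*h1 - α*hs
  field_simp
  linear_combination ht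

private lemma line_card {F : Type} [Field F] [Fintype F] [DecidableEq F] {α : F} (hα : α ≠ 0) :
    (Finset.univ.filter fun ts : F × F => α*ts.1 + α^2*ts.2 = 1).card = Fintype.card F := by
  rw [← Finset.card_univ]
  refine Finset.card_bij' (fun ts _ => ts.2) (fun s _ => (α⁻¹*(1 - α^2*s), s))
    (fun a _ => Finset.mem_univ _) ?_ ?_ ?_
  · intro s _
    simp only [Finset.mem_filter, Finset.mem_univ, true_and]
    field_simp
    ring
  · intro a ha
    simp only [Finset.mem_filter, Finset.mem_univ, true_and] at ha
    have : α⁻¹*(1 - α^2*a.2) = a.1 := by field_simp; linear_combination -ha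
    simp [this]
  · intro s _; rfl

private lemma pair_card {F : Type} [Field F] [Fintype F] [DecidableEq F] {α β : F}
    (hα : α ≠ 0) (hβ : β ≠ 0) (hne : α ≠ β) :
    (Finset.univ.filter fun ts : F × F => α*ts.1 + α^2*ts.2 = 1 ∧ β*ts.1 + β^2*ts.2 = 1).card
      = 1 := by
  rw [Finset.card_eq_one]
  refine ⟨(α⁻¹ + β⁻¹, -(α*β)⁻¹), ?_⟩
  ext ts
  simp only [Finset.mem_filter, Finset.mem_univ, true_and, Finset.mem_singleton]
  constructor
  · rintro ⟨h1, h2⟩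
    obtain ⟨hs, ht⟩ := pair_sol hα hβ hne h1 h2
    have hs' : ts.2 = -(α*β)⁻¹ := by
      field_simp
      linear_combination hs
    exact Prod.ext ht hs'
  · rintro rfl
    constructor
    · show α * (α⁻¹ + β⁻¹) + α^2 * (-(α*β)⁻¹) = 1
      field_simp
      ring
    · show β * (α⁻¹ + β⁻¹) + β^2 * (-(α*β)⁻¹) = 1
      field_simp
      ring

/-- Inclusion–exclusion count: for any set `A` of nonzero field elements, the number of
pairs `(t,s)` with `α·t + α²·s ≠ 1` for all `α ∈ A` is `q² - |A|·q + |A|(|A|-1)/2`;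
in particular for `A = F∖{0}` the corresponding staying probability is
`(q² - q + 2)/(2q²)`. -/
theorem stmt_4 (F : Type) [Field F] [Fintype F] [DecidableEq F] (q : ℕ)
    (hq : Fintype.card F = q) (A : Finset F) (hA : ∀ α ∈ A, α ≠ 0) :
    (Finset.univ.filter fun ts : F × F => ∀ α ∈ A, α * ts.1 + α ^ 2 * ts.2 ≠ 1).card
      = q ^ 2 - A.card * q + A.card * (A.card - 1) / 2 ∧
    (A = Finset.univ.filter (fun α : F => α ≠ 0) →
      ((Finset.univ.filter fun ts : F × F =>
          ∀ α ∈ A, α * ts.1 + α ^ 2 * ts.2 ≠ 1).card : ℝ) / (q : ℝ) ^ 2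
        = ((q : ℝ) ^ 2 - q + 2) / (2 * (q : ℝ) ^ 2)) := by
  classical
  set k := A.card with hk
  clear_value k
  set n : F × F → ℕ := fun ts => (A.filter fun α => α*ts.1 + α^2*ts.2 = 1).card with hn
  -- each point lies on at most 2 lines
  have hn2 : ∀ ts : F × F, n ts ≤ 2 := by
    intro ts
    by_contra h
    push_neg at h
    obtain ⟨a, b, c, ha, hb, hc, hab, hac, hbc⟩ := Finset.two_lt_card_iff.mp h
    simp only [hn, Finset.mem_filter] at ha hb hc
    have hsab := (pair_sol (hA a ha.1) (hA b hb.1) hab ha.2 hb.2).1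
    have hsac := (pair_sol (hA a ha.1) (hA c hc.1) hac ha.2 hc.2).1
    have h0 : a * ts.2 * (b - c) = 0 := by linear_combination hsab - hsac
    rcases mul_eq_zero.mp h0 with h' | h'
    · rcases mul_eq_zero.mp h' with h'' | h''
      · exact hA a ha.1 h''
      · rw [h''] at hsab; simp at hsab
    · exact hbc (sub_eq_zero.mp h')
  -- sum of n = k * q
  have hS1 : ∑ ts : F × F, n ts = k * q := by
    calc ∑ ts : F × F, n ts
        = ∑ ts : F × F, ∑ α ∈ A, (if α*ts.1 + α^2*ts.2 = 1 then 1 else 0) := by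
          refine Finset.sum_congr rfl fun ts _ => ?_
          simp only [hn]; exact Finset.card_filter _ _
      _ = ∑ α ∈ A, ∑ ts : F × F, (if α*ts.1 + α^2*ts.2 = 1 then 1 else 0) :=
          Finset.sum_comm
      _ = ∑ _α ∈ A, q := by
          refine Finset.sum_congr rfl fun α hα => ?_
          rw [← Finset.card_filter, line_card (hA α hα), hq]
      _ = k * q := by rw [Finset.sum_const, smul_eq_mul, ← hk]
  -- sum of n^2 (in ℤ)
  have hS2 : ∑ ts : F × F, (n ts : ℤ) * n ts = k * q + k * ((k:ℤ) - 1) := by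
    have expand : ∀ ts : F × F, (n ts : ℤ) * n ts
        = ∑ α ∈ A, ∑ β ∈ A,
            (if α*ts.1 + α^2*ts.2 = 1 ∧ β*ts.1 + β^2*ts.2 = 1 then (1:ℤ) else 0) := by
      intro ts
      have h0 : (n ts : ℤ) = ∑ α ∈ A, (if α*ts.1 + α^2*ts.2 = 1 then (1:ℤ) else 0) := by
        simp only [hn]
        rw [show (A.filter fun α => α*ts.1 + α^2*ts.2 = 1).card
            = ∑ α ∈ A, (if α*ts.1 + α^2*ts.2 = 1 then 1 else 0) from Finset.card_filter _ _]
        push_cast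
        rfl
      rw [h0, Finset.sum_mul_sum]
      refine Finset.sum_congr rfl fun α _ => Finset.sum_congr rfl fun β _ => ?_
      by_cases h1 : α*ts.1 + α^2*ts.2 = 1 <;> by_cases h2 : β*ts.1 + β^2*ts.2 = 1 <;>
        simp [h1, h2]
    calc ∑ ts : F × F, (n ts : ℤ) * n ts
        = ∑ α ∈ A, ∑ β ∈ A, ∑ ts : F × F,
            (if α*ts.1 + α^2*ts.2 = 1 ∧ β*ts.1 + β^2*ts.2 = 1 then (1:ℤ) else 0) := by
          rw [Finset.sum_congr rfl fun ts _ => expand ts, Finset.sum_comm]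
          exact Finset.sum_congr rfl fun α _ => Finset.sum_comm
      _ = ∑ α ∈ A, ∑ β ∈ A, (if α = β then (q : ℤ) else 1) := by
          refine Finset.sum_congr rfl fun α hα => Finset.sum_congr rfl fun β hβ => ?_
          rw [Finset.sum_boole]
          by_cases h : α = β
          · subst h
            rw [if_pos rfl]
            rw [show (Finset.univ.filter fun ts : F × F =>
                  α*ts.1 + α^2*ts.2 = 1 ∧ α*ts.1 + α^2*ts.2 = 1)
                = Finset.univ.filter fun ts : F × F => α*ts.1 + α^2*ts.2 = 1
              from Finset.filter_congr fun ts _ => and_self_iff]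
            rw [line_card (hA α hα), hq]
          · rw [if_neg h, pair_card (hA α hα) (hA β hβ) h, Nat.cast_one]
      _ = ∑ _α ∈ A, ((q : ℤ) + ((k:ℤ) - 1)) := by
          refine Finset.sum_congr rfl fun α hα => ?_
          rw [← Finset.add_sum_erase A _ hα, if_pos rfl]
          rw [Finset.sum_congr rfl fun β hβ =>
            if_neg (fun h => (Finset.ne_of_mem_erase hβ) h.symm)]
          rw [Finset.sum_const, Finset.card_erase_of_mem hα, nsmul_eq_mul, mul_one]
          have hk1 : 1 ≤ A.card := Finset.card_pos.mpr ⟨α, hα⟩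
          rw [hk]
          push_cast [Nat.cast_sub hk1]
          ring
      _ = k * q + k * ((k:ℤ) - 1) := by
          rw [Finset.sum_const, ← hk, nsmul_eq_mul]
          -- push_cast
          ring
  -- counts
  set B := (Finset.univ.filter fun ts : F × F => ¬ ∀ α ∈ A, α * ts.1 + α ^ 2 * ts.2 ≠ 1).card
    with hB
  set G := (Finset.univ.filter fun ts : F × F => ∀ α ∈ A, α * ts.1 + α ^ 2 * ts.2 ≠ 1).card
    with hG
  have hGB : G + B = q ^ 2 := by
    rw [hG, hB, Finset.card_filter_add_card_filter_not, Finset.card_univ,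
      Fintype.card_prod, hq, sq]
  have hBval : 2 * (B : ℤ) = 2 * k * q - k * ((k:ℤ) - 1) := by
    have key : ∀ ts : F × F,
        (if ¬ ∀ α ∈ A, α * ts.1 + α ^ 2 * ts.2 ≠ 1 then (2:ℤ) else 0)
          = 2 * (n ts : ℤ) - (n ts : ℤ) * ((n ts : ℤ) - 1) := by
      intro ts
      have hmem : (¬ ∀ α ∈ A, α * ts.1 + α ^ 2 * ts.2 ≠ 1) ↔ 1 ≤ n ts := by
        simp only [hn]
        simp only [Finset.one_le_card, Finset.filter_nonempty_iff]
        push_neg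
        rfl
      have h2 := hn2 ts
      have h3 : n ts = 0 ∨ n ts = 1 ∨ n ts = 2 := by omega
      rw [if_congr hmem rfl rfl]
      rcases h3 with h | h | h <;> rw [h] <;> norm_num
    have hsum : ∑ ts : F × F, (if ¬ ∀ α ∈ A, α * ts.1 + α ^ 2 * ts.2 ≠ 1 then (2:ℤ) else 0)
        = 2 * (B : ℤ) := by
      rw [← Finset.sum_filter, Finset.sum_const, hB, nsmul_eq_mul]
      ring
    have hS1' : ∑ ts : F × F, (n ts : ℤ) = k * q := by
      rw [← Nat.cast_sum, hS1]; push_cast; ring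
    have hsplit : ∑ ts : F × F, (2 * (n ts : ℤ) - (n ts : ℤ) * ((n ts : ℤ) - 1))
        = 2 * (∑ ts : F × F, (n ts : ℤ)) - ((∑ ts : F × F, (n ts:ℤ) * n ts)
            - ∑ ts : F × F, (n ts : ℤ)) := by
      rw [Finset.mul_sum, ← Finset.sum_sub_distrib, ← Finset.sum_sub_distrib]
      exact Finset.sum_congr rfl fun ts _ => by ring
    rw [← hsum, Finset.sum_congr rfl fun ts _ => key ts, hsplit, hS1', hS2]
    ring
  have hkq : k ≤ q := by
    rw [← hq, hk, ← Finset.card_univ]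
    exact Finset.card_le_card (Finset.subset_univ A)
  have hCeven : 2 * (k * (k - 1) / 2) = k * (k - 1) := by
    rcases Nat.eq_zero_or_pos k with h | h
    · simp [h]
    · refine Nat.mul_div_cancel' ?_
      obtain ⟨m, rfl⟩ : ∃ m, k = m + 1 := ⟨k - 1, by omega⟩
      simpa [mul_comm] using (Nat.even_mul_succ_self m).two_dvd
  have h2 : 2 * B + k * (k - 1) = 2 * (k * q) := by
    rcases Nat.eq_zero_or_pos k with h | h
    · rw [h] at hBval ⊢
      simp only [Nat.cast_zero, zero_mul, mul_zero, Nat.zero_sub, sub_zero, zero_sub] at hBval ⊢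
      norm_num at hBval
      omega
    · have hcast : ((k:ℤ) - 1) = ((k - 1 : ℕ) : ℤ) := by
        rw [Nat.cast_sub h]; norm_num
      rw [hcast] at hBval
      have : 2 * (B : ℤ) + ((k:ℕ):ℤ) * ((k - 1 : ℕ) : ℤ) = 2 * (((k:ℕ):ℤ) * ((q:ℕ):ℤ)) := by
        linarith [hBval]
      exact_mod_cast this
  have hmain : G = q ^ 2 - k * q + k * (k - 1) / 2 := by
    have h1 : k * q ≤ q ^ 2 := by rw [sq]; exact Nat.mul_le_mul_right q hkq
    have h3 : 2 * B + 2 * (k * (k - 1) / 2) = 2 * (k * q) := by rw [hCeven]; exact h2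
    clear_value B G
    generalize hX : k * q = X at h1 h3 ⊢
    generalize hCg : k * (k - 1) / 2 = C at h3 ⊢
    generalize hQg : q ^ 2 = Q at h1 hGB ⊢
    omega
  refine ⟨hmain, ?_⟩
  intro hAeq
  have hq2 : 2 ≤ q := by rw [← hq]; exact Fintype.one_lt_card
  have hkval : k = q - 1 := by
    rw [hk, hAeq, Finset.filter_ne' Finset.univ 0, Finset.card_erase_of_mem (Finset.mem_univ 0),
      Finset.card_univ, hq]
  -- nat arithmetic: 2*G + q = q^2 + 2
  have hfin : 2 * G + q = q ^ 2 + 2 := by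
    obtain ⟨m, rfl⟩ : ∃ m, q = m + 2 := ⟨q - 2, by omega⟩
    have hk' : k = m + 1 := by omega
    rw [hmain, hk']
    have e1 : (m+2) ^ 2 - (m+1) * (m+2) = m + 2 := by
      rw [Nat.sub_eq_iff_eq_add (by nlinarith)]
      ring
    have e2 : 2 * ((m+1) * ((m+1) - 1) / 2) = (m+1) * m := by
      rw [Nat.add_sub_cancel]
      refine Nat.mul_div_cancel' ?_
      simpa [mul_comm] using (Nat.even_mul_succ_self m).two_dvd
    rw [e1, Nat.mul_add, e2]
    ring
  have hcast : 2 * (G : ℝ) = (q:ℝ) ^ 2 - q + 2 := by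
    have := hfin
    have h' : (2 * G + q : ℝ) = (q:ℝ) ^ 2 + 2 := by exact_mod_cast congrArg (Nat.cast : ℕ → ℝ) this
    push_cast at h'
    linarith
  have hq0 : (q : ℝ) ≠ 0 := by positivity
  rw [div_eq_div_iff (by positivity) (by positivity)]
  linear_combination (q:ℝ)^2 * hcast
end

section
/- Let F be a finite field with q ≥ 3 elements, let l ≥ 0 be an integer, and let d = (q−1)·q^l. Then there exists an F-linear subspace C of F^d such that: (i) |C| = q^{l+2}; (ii) for all distinct coordinates i ≠ j and all a, b ∈ F, the number of x ∈ C with x_i = a and x_j = b equals q^l (i.e. C is pairwise independent); and (iii) the number of x ∈ C with x_i ≠ 1 for every coordinate i is at least (q² − q + 2)/2. In particular C stays in the (q−1)-element subset F∖{1} with probability at least (1/3)·(q−1)/(d + q − 1). -/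
open Finset

lemma two_mul_count (F : Type) [Field F] [Fintype F] (q : ℕ) (hq : Fintype.card F = q)
    (hq3 : 3 ≤ q) :
    2 * {p : F × F | ∀ α : F, p.2 * α ^ 2 + p.1 * α ≠ 1}.ncard = q ^ 2 - q + 2 := by
  classical
  set n : F × F → ℕ := fun p => (univ.filter (fun α : F => p.2 * α ^ 2 + p.1 * α = 1)).card
    with hn
  -- n p ≤ 2
  have h2 : ∀ p : F × F, n p ≤ 2 := by
    intro p
    by_contra h
    push_neg at h
    obtain ⟨a, b, c, ha, hb, hc, hab, hac, hbc⟩ := Finset.two_lt_card_iff.mp h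
    simp only [mem_filter, mem_univ, true_and] at ha hb hc
    have e1 : (p.2 * (a + b) + p.1) * (a - b) = 0 := by linear_combination ha - hb
    have e2 : (p.2 * (a + c) + p.1) * (a - c) = 0 := by linear_combination ha - hc
    have f1 : p.2 * (a + b) + p.1 = 0 :=
      (mul_eq_zero.mp e1).resolve_right (sub_ne_zero.mpr hab)
    have f2 : p.2 * (a + c) + p.1 = 0 :=
      (mul_eq_zero.mp e2).resolve_right (sub_ne_zero.mpr hac)
    have hs : p.2 = 0 := by
      have : p.2 * (b - c) = 0 := by linear_combination f1 - f2
      exact (mul_eq_zero.mp this).resolve_right (sub_ne_zero.mpr hbc)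
    have ht : p.1 = 0 := by linear_combination f1 - (a + b) * hs
    rw [hs, ht] at ha
    simp at ha
  -- sum of n
  have hsum1 : ∑ p : F × F, n p = (q - 1) * q := by
    have hswap : ∑ p : F × F, n p
        = ∑ α : F, (univ.filter (fun p : F × F => p.2 * α ^ 2 + p.1 * α = 1)).card := by
      simp only [hn, Finset.card_filter]
      rw [Finset.sum_comm]
    rw [hswap]
    have hval : ∀ α : F, (univ.filter (fun p : F × F => p.2 * α ^ 2 + p.1 * α = 1)).card
        = if α = 0 then 0 else q := by
      intro α
      by_cases hα : α = 0
      · simp [hα]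
      · rw [if_neg hα]
        have himg : univ.filter (fun p : F × F => p.2 * α ^ 2 + p.1 * α = 1)
            = univ.image (fun s : F => (α⁻¹ * (1 - s * α ^ 2), s)) := by
          ext p
          simp only [mem_filter, mem_univ, true_and, mem_image]
          constructor
          · intro hp
            refine ⟨p.2, ?_⟩
            have h1 : p.1 = α⁻¹ * (1 - p.2 * α ^ 2) := by
              field_simp
              linear_combination hp
            exact Prod.ext h1.symm rfl
          · rintro ⟨s, rfl⟩
            field_simp
            ring
        rw [himg, Finset.card_image_of_injective _ (fun s t hst => (Prod.ext_iff.mp hst).2),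
          Finset.card_univ, hq]
    rw [Finset.sum_congr rfl (fun α _ => hval α)]
    have hcerase : (univ.filter (fun α : F => ¬ α = 0)).card = q - 1 := by
      have : (univ.filter (fun α : F => ¬ α = 0)) = univ.erase (0 : F) := by
        ext x; simp [Finset.mem_erase]
      rw [this, Finset.card_erase_of_mem (mem_univ _), Finset.card_univ, hq]
    rw [Finset.sum_ite, Finset.sum_const_zero, Finset.sum_const, zero_add, hcerase,
      smul_eq_mul]
  -- sum of n(n-1)
  have hsum2 : ∑ p : F × F, n p * (n p - 1) = (q - 1) * (q - 2) := by
    have hoff : ∀ p : F × F, n p * (n p - 1)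
        = ((univ.filter (fun α : F => p.2 * α ^ 2 + p.1 * α = 1)).offDiag).card := by
      intro p
      rw [Finset.offDiag_card]
      show n p * (n p - 1) = n p * n p - n p
      cases hnp : n p with
      | zero => simp
      | succ k =>
          simp only [Nat.succ_sub_one]
          exact (Nat.sub_eq_of_eq_add (by ring)).symm
    have hoff2 : ∀ p : F × F,
        ((univ.filter (fun α : F => p.2 * α ^ 2 + p.1 * α = 1)).offDiag)
        = univ.offDiag.filter (fun z : F × F =>
            p.2 * z.1 ^ 2 + p.1 * z.1 = 1 ∧ p.2 * z.2 ^ 2 + p.1 * z.2 = 1) := by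
      intro p
      ext z
      simp only [Finset.mem_offDiag, mem_filter, mem_univ, true_and]
      tauto
    have hswap : ∑ p : F × F, n p * (n p - 1)
        = ∑ z ∈ univ.offDiag, (univ.filter (fun p : F × F =>
            p.2 * z.1 ^ 2 + p.1 * z.1 = 1 ∧ p.2 * z.2 ^ 2 + p.1 * z.2 = 1)).card := by
      simp only [fun p : F × F => (hoff p).trans (congrArg Finset.card (hoff2 p))]
      simp only [Finset.card_filter]
      rw [Finset.sum_comm]
    rw [hswap]
    have hval : ∀ z : F × F, z ∈ univ.offDiag → (univ.filter (fun p : F × F =>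
          p.2 * z.1 ^ 2 + p.1 * z.1 = 1 ∧ p.2 * z.2 ^ 2 + p.1 * z.2 = 1)).card
        = if z.1 ≠ 0 ∧ z.2 ≠ 0 then 1 else 0 := by
      rintro ⟨α, α'⟩ hz
      rw [Finset.mem_offDiag] at hz
      have hne : α ≠ α' := hz.2.2
      by_cases hα : α = 0
      · subst hα
        rw [if_neg (by tauto)]
        rw [Finset.card_eq_zero, Finset.filter_eq_empty_iff]
        rintro p -
        simp only
        rintro ⟨h1, -⟩
        simp at h1
      · by_cases hα' : α' = 0
        · subst hα'
          rw [if_neg (by tauto)]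
          rw [Finset.card_eq_zero, Finset.filter_eq_empty_iff]
          rintro p -
          simp only
          rintro ⟨-, h2⟩
          simp at h2
        · rw [if_pos ⟨hα, hα'⟩, Finset.card_eq_one]
          refine ⟨((α + α') * (α * α')⁻¹, -(α * α')⁻¹), ?_⟩
          rw [Finset.eq_singleton_iff_unique_mem]
          constructor
          · simp only [mem_filter, mem_univ, true_and]
            constructor
            · field_simp
              ring
            · field_simp
              ring
          · rintro p hp
            simp only [mem_filter, mem_univ, true_and] at hp
            obtain ⟨e1, e2⟩ := hp
            have hs : p.2 * (α * α') = -1 := by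
              have h3 : (p.2 * (α * α') + 1) * (α - α') = 0 := by
                linear_combination α' * e1 - α * e2
              have := (mul_eq_zero.mp h3).resolve_right (sub_ne_zero.mpr hne)
              linear_combination this
            have ht : p.1 * (α * α') = α + α' := by
              linear_combination α' * e1 - α * hs
            have hαα' : α * α' ≠ 0 := mul_ne_zero hα hα'
            have hp1 : p.1 = (α + α') * (α * α')⁻¹ := by
              field_simp
              linear_combination ht
            have hp2 : p.2 = -(α * α')⁻¹ := by
              field_simp
              linear_combination hs
            exact Prod.ext hp1 hp2
    rw [Finset.sum_congr rfl hval]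
    rw [Finset.sum_ite, Finset.sum_const_zero, Finset.sum_const, add_zero, smul_eq_mul, mul_one]
    have : univ.offDiag.filter (fun z : F × F => z.1 ≠ 0 ∧ z.2 ≠ 0)
        = (univ.erase (0 : F)).offDiag := by
      ext z
      simp only [mem_filter, Finset.mem_offDiag, Finset.mem_erase, mem_univ, true_and, and_true]
      tauto
    rw [this, Finset.offDiag_card, Finset.card_erase_of_mem (mem_univ _), Finset.card_univ, hq]
    obtain ⟨m, rfl⟩ := Nat.exists_eq_add_of_le hq3
    rw [show 3 + m - 1 = m + 2 by omega, show 3 + m - 2 = m + 1 by omega]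
    exact Nat.sub_eq_of_eq_add (by ring)
  set N0 := (univ.filter (fun p : F × F => n p = 0)).card with hN0
  have hset : {p : F × F | ∀ α : F, p.2 * α ^ 2 + p.1 * α ≠ 1}
      = ↑(univ.filter (fun p : F × F => n p = 0)) := by
    ext p
    simp [hn, Finset.card_eq_zero, Finset.filter_eq_empty_iff]
  rw [hset, Set.ncard_coe_finset, ← hN0]
  -- the key integer identity
  have hptw : ∀ p : F × F, ((n p : ℤ) - 1) * ((n p : ℤ) - 2)
      = if n p = 0 then 2 else 0 := by
    intro p
    have := h2 p
    have h012 : n p = 0 ∨ n p = 1 ∨ n p = 2 := by omega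
    rcases h012 with h | h | h <;> rw [h] <;> norm_num
  have hsumA : ∑ p : F × F, ((n p : ℤ) - 1) * ((n p : ℤ) - 2) = 2 * N0 := by
    rw [Finset.sum_congr rfl (fun p _ => hptw p), Finset.sum_ite, Finset.sum_const_zero,
      Finset.sum_const, add_zero, nsmul_eq_mul, hN0]
    ring
  have hcast : ∀ k : ℕ, ((k * (k - 1) : ℕ) : ℤ) = (k : ℤ) * ((k : ℤ) - 1) := by
    intro k
    cases k with
    | zero => simp
    | succ m => push_cast [Nat.succ_sub_one]; ring
  have hsumB : ∑ p : F × F, ((n p : ℤ) - 1) * ((n p : ℤ) - 2)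
      = ((q - 1) * (q - 2) : ℕ) - 2 * ((q - 1) * q : ℕ) + 2 * (q ^ 2 : ℕ) := by
    have : ∀ p : F × F, ((n p : ℤ) - 1) * ((n p : ℤ) - 2)
        = ((n p * (n p - 1) : ℕ) : ℤ) - 2 * (n p : ℤ) + 2 := by
      intro p; rw [hcast]; ring
    rw [Finset.sum_congr rfl (fun p _ => this p)]
    rw [Finset.sum_add_distrib, Finset.sum_sub_distrib, ← Nat.cast_sum, hsum2,
      ← Finset.mul_sum, ← Nat.cast_sum, hsum1, Finset.sum_const, Finset.card_univ,
      Fintype.card_prod, hq, nsmul_eq_mul]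
    push_cast
    ring
  have hkey : 2 * (N0 : ℤ) = ((q - 1) * (q - 2) : ℕ) - 2 * ((q - 1) * q : ℕ) + 2 * (q ^ 2 : ℕ) := by
    rw [← hsumA, hsumB]
  have hqq : q ≤ q ^ 2 := Nat.le_self_pow (by norm_num) q
  have h1 : ((q - 1) * (q - 2) : ℕ) = ((q : ℤ) - 1) * ((q : ℤ) - 2) := by
    push_cast [Nat.cast_sub (show 1 ≤ q by omega), Nat.cast_sub (show 2 ≤ q by omega)]
    ring
  have h2' : (((q - 1) * q : ℕ) : ℤ) = ((q : ℤ) - 1) * q := by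
    push_cast [Nat.cast_sub (show 1 ≤ q by omega)]
    ring
  rw [h1, h2'] at hkey
  have hfin : 2 * (N0 : ℤ) = (q ^ 2 : ℕ) - (q : ℤ) + 2 := by rw [hkey]; push_cast; ring
  omega
def codeMap (F : Type) [Field F] (l d : ℕ)
    (e : Fin d ≃ ({α : F // α ≠ 0} × (Fin l → F))) :
    (F × F × (Fin l → F)) →ₗ[F] (Fin d → F) where
  toFun v i := ((e i).1 : F) * v.1 + ((e i).1 : F) ^ 2 * v.2.1 + ∑ k, (e i).2 k * v.2.2 k
  map_add' u v := by
    funext i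
    simp only [Prod.fst_add, Prod.snd_add, Pi.add_apply, mul_add, Finset.sum_add_distrib]
    ring
  map_smul' c v := by
    funext i
    simp only [Prod.smul_fst, Prod.smul_snd, Pi.smul_apply, smul_eq_mul, RingHom.id_apply]
    rw [show ∑ k, ((e i).2 k) * (c * v.2.2 k) = c * ∑ k, ((e i).2 k) * v.2.2 k by
      rw [Finset.mul_sum]; exact Finset.sum_congr rfl fun k _ => by ring]
    ring

lemma codeMap_apply (F : Type) [Field F] (l d : ℕ)
    (e : Fin d ≃ ({α : F // α ≠ 0} × (Fin l → F))) (v : F × F × (Fin l → F)) (i : Fin d) :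
    codeMap F l d e v i
      = ((e i).1 : F) * v.1 + ((e i).1 : F) ^ 2 * v.2.1 + ∑ k, (e i).2 k * v.2.2 k := rfl

lemma codeMap_symm_apply (F : Type) [Field F] (l d : ℕ)
    (e : Fin d ≃ ({α : F // α ≠ 0} × (Fin l → F))) (v : F × F × (Fin l → F))
    (x : {α : F // α ≠ 0} × (Fin l → F)) :
    codeMap F l d e v (e.symm x)
      = (x.1 : F) * v.1 + (x.1 : F) ^ 2 * v.2.1 + ∑ k, x.2 k * v.2.2 k := by
  rw [codeMap_apply, Equiv.apply_symm_apply]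

lemma exists_two_nonzero (F : Type) [Field F] [Fintype F] (h3 : 3 ≤ Fintype.card F) :
    ∃ a b : F, a ≠ 0 ∧ b ≠ 0 ∧ a ≠ b := by
  classical
  have hcard : 1 < Fintype.card {x : F // x ≠ 0} := by
    rw [Fintype.card_subtype_compl, Fintype.card_subtype_eq]
    omega
  obtain ⟨a, b, hab⟩ := Fintype.exists_pair_of_one_lt_card hcard
  exact ⟨a.1, b.1, a.2, b.2, fun h => hab (Subtype.ext h)⟩

lemma codeMap_injective (F : Type) [Field F] [Fintype F] (l d : ℕ)
    (e : Fin d ≃ ({α : F // α ≠ 0} × (Fin l → F))) (h3 : 3 ≤ Fintype.card F) :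
    Function.Injective (codeMap F l d e) := by
  rw [injective_iff_map_eq_zero]
  rintro ⟨t, s, w⟩ hv
  obtain ⟨a, b, ha, hb, hab⟩ := exists_two_nonzero F h3
  have heval : ∀ x : {α : F // α ≠ 0} × (Fin l → F),
      (x.1 : F) * t + (x.1 : F) ^ 2 * s + ∑ k, x.2 k * w k = 0 := by
    intro x
    have := congrFun hv (e.symm x)
    rwa [codeMap_symm_apply] at this
  have hA := heval (⟨a, ha⟩, 0)
  have hB := heval (⟨b, hb⟩, 0)
  simp only [Pi.zero_apply, zero_mul, Finset.sum_const_zero, add_zero] at hA hB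
  have hs : s = 0 := by
    have h1 : a * (t + a * s) = 0 := by linear_combination hA
    have h2 : b * (t + b * s) = 0 := by linear_combination hB
    have h1' : t + a * s = 0 := (mul_eq_zero.mp h1).resolve_left ha
    have h2' : t + b * s = 0 := (mul_eq_zero.mp h2).resolve_left hb
    have : (a - b) * s = 0 := by linear_combination h1' - h2'
    exact (mul_eq_zero.mp this).resolve_left (sub_ne_zero.mpr hab)
  have ht : t = 0 := by
    have h1 : a * (t + a * s) = 0 := by linear_combination hA
    have h1' : t + a * s = 0 := (mul_eq_zero.mp h1).resolve_left ha
    rw [hs, mul_zero, add_zero] at h1'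
    exact h1'
  have hw : w = 0 := by
    funext k
    have := heval (⟨a, ha⟩, Pi.single k 1)
    rw [hs, ht] at this
    simpa [Pi.single_apply, Finset.sum_ite_eq'] using this
  rw [hs, ht, hw]
  rfl

lemma codeMap_pair_surj (F : Type) [Field F] [Fintype F] (l d : ℕ)
    (e : Fin d ≃ ({α : F // α ≠ 0} × (Fin l → F))) (i j : Fin d) (hij : i ≠ j)
    (a b : F) : ∃ v, codeMap F l d e v i = a ∧ codeMap F l d e v j = b := by
  set x := e i with hx
  set y := e j with hy
  have hxy : x ≠ y := fun h => hij (e.injective h)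
  set α : F := (x.1 : F) with hα
  set α' : F := (y.1 : F) with hα'
  have hα0 : α ≠ 0 := x.1.2
  have hα'0 : α' ≠ 0 := y.1.2
  by_cases hA : α = α'
  · -- same first component, so second components differ
    have h1 : x.1 = y.1 := Subtype.ext hA
    have h2 : x.2 ≠ y.2 := fun h => hxy (Prod.ext h1 h)
    have : ∃ k, x.2 k ≠ y.2 k := by
      by_contra h
      push_neg at h
      exact h2 (funext h)
    obtain ⟨k, hk⟩ := this
    set c : F := (a - b) / (x.2 k - y.2 k) with hc
    refine ⟨((a - x.2 k * c) / α, 0, Pi.single k c), ?_, ?_⟩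
    · rw [codeMap_apply, ← hx]
      have hsum : ∑ m, x.2 m * (Pi.single k c : Fin l → F) m = x.2 k * c := by
        simp [Pi.single_apply, mul_ite, Finset.sum_ite_eq']
      rw [hsum]
      field_simp
      simp only [hα]
      ring
    · rw [codeMap_apply, ← hy]
      have hsum : ∑ m, y.2 m * (Pi.single k c : Fin l → F) m = y.2 k * c := by
        simp [Pi.single_apply, mul_ite, Finset.sum_ite_eq']
      rw [hsum, ← hα', ← hA, hc]
      have hd : x.2 k - y.2 k ≠ 0 := sub_ne_zero.mpr hk
      field_simp
      ring
  · -- distinct first components: Vandermonde solve with w = 0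
    have hD : α * α' * (α' - α) ≠ 0 :=
      mul_ne_zero (mul_ne_zero hα0 hα'0) (sub_ne_zero.mpr fun h => hA h.symm)
    refine ⟨((α' ^ 2 * a - α ^ 2 * b) / (α * α' * (α' - α)),
             (α * b - α' * a) / (α * α' * (α' - α)), 0), ?_, ?_⟩
    · rw [codeMap_apply, ← hx]
      simp only [Pi.zero_apply, mul_zero, Finset.sum_const_zero, add_zero]
      field_simp
      ring
    · rw [codeMap_apply, ← hy]
      simp only [Pi.zero_apply, mul_zero, Finset.sum_const_zero, add_zero]
      field_simp
      ring



/-- For `q ≥ 3` and `d = (q-1)·q^l` there is a pairwise independent linear subspace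
`C ⊆ F^d` of size `q^(l+2)` such that at least `(q² - q + 2)/2` codewords avoid the
value `1` in every coordinate; in particular `C` stays in the `(q-1)`-element set
`F∖{1}` with probability at least `(1/3)·(q-1)/(d+q-1)`. -/
theorem stmt_5 (F : Type) [Field F] [Fintype F] (q : ℕ) (hq : Fintype.card F = q)
    (hq3 : 3 ≤ q) (l : ℕ) (d : ℕ) (hd : d = (q - 1) * q ^ l) :
    ∃ C : Submodule F (Fin d → F),
      Nat.card C = q ^ (l + 2) ∧
      (∀ i j : Fin d, i ≠ j → ∀ a b : F,
          {x : Fin d → F | x ∈ C ∧ x i = a ∧ x j = b}.ncard = q ^ l) ∧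
      (q ^ 2 - q + 2) / 2 ≤ {x : Fin d → F | x ∈ C ∧ ∀ i, x i ≠ 1}.ncard ∧
      ((1 : ℝ) / 3) * ((q : ℝ) - 1) / ((d : ℝ) + (q : ℝ) - 1) ≤
        ({x : Fin d → F | x ∈ C ∧ ∀ i, x i ≠ 1}.ncard : ℝ) / (Nat.card C : ℝ) := by
  classical
  have hq1 : 1 ≤ q := by omega
  have e : Fin d ≃ ({α : F // α ≠ 0} × (Fin l → F)) :=
    Fintype.equivOfCardEq (by
      rw [Fintype.card_fin, Fintype.card_prod, Fintype.card_subtype_compl,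
        Fintype.card_subtype_eq, Fintype.card_fun, Fintype.card_fin, hq, hd])
  set φ := codeMap F l d e with hφ
  have hinj : Function.Injective φ := codeMap_injective F l d e (by rw [hq]; exact hq3)
  set C := LinearMap.range φ with hCdef
  have hVcard : Nat.card (F × F × (Fin l → F)) = q ^ (l + 2) := by
    rw [Nat.card_eq_fintype_card, Fintype.card_prod, Fintype.card_prod, Fintype.card_fun,
      Fintype.card_fin, hq]
    ring
  have hCcard : Nat.card C = q ^ (l + 2) := by
    rw [← hVcard]
    exact Nat.card_congr (LinearEquiv.ofInjective φ hinj).toEquiv.symm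
  -- the good-set lower bound, used twice
  have hScount := two_mul_count F q hq hq3
  have hsub : (fun p : F × F => φ (p.1, p.2, 0)) '' {p : F × F | ∀ α : F, p.2 * α ^ 2 + p.1 * α ≠ 1}
      ⊆ {x : Fin d → F | x ∈ C ∧ ∀ i, x i ≠ 1} := by
    rintro x ⟨p, hp, rfl⟩
    refine ⟨⟨(p.1, p.2, 0), rfl⟩, fun i => ?_⟩
    show codeMap F l d e (p.1, p.2, 0) i ≠ 1
    rw [codeMap_apply]
    simp only [Pi.zero_apply, mul_zero, Finset.sum_const_zero, add_zero]
    intro hcon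
    exact hp ((e i).1 : F) (by linear_combination hcon)
  have hinj2 : Function.Injective (fun p : F × F => φ (p.1, p.2, 0)) := by
    intro p p' hpp
    have h := hinj hpp
    simpa [Prod.ext_iff] using h
  have hle : {p : F × F | ∀ α : F, p.2 * α ^ 2 + p.1 * α ≠ 1}.ncard
      ≤ {x : Fin d → F | x ∈ C ∧ ∀ i, x i ≠ 1}.ncard := by
    calc {p : F × F | ∀ α : F, p.2 * α ^ 2 + p.1 * α ≠ 1}.ncard
        = ((fun p : F × F => φ (p.1, p.2, 0)) ''
            {p : F × F | ∀ α : F, p.2 * α ^ 2 + p.1 * α ≠ 1}).ncard :=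
          (Set.ncard_image_of_injective _ hinj2).symm
      _ ≤ _ := Set.ncard_le_ncard hsub (Set.toFinite _)
  have hG2 : q ^ 2 - q + 2 ≤ 2 * {x : Fin d → F | x ∈ C ∧ ∀ i, x i ≠ 1}.ncard :=
    le_of_eq_of_le hScount.symm (Nat.mul_le_mul_left 2 hle)
  clear_value φ C
  have hpart3 : (q ^ 2 - q + 2) / 2 ≤ {x : Fin d → F | x ∈ C ∧ ∀ i, x i ≠ 1}.ncard :=
    Nat.div_le_of_le_mul hG2
  refine ⟨C, hCcard, ?_, hpart3, ?_⟩
  · -- pairwise independence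
    intro i j hij a b
    set ψ : (F × F × (Fin l → F)) →ₗ[F] F × F :=
      LinearMap.prod (LinearMap.proj i ∘ₗ φ) (LinearMap.proj j ∘ₗ φ) with hψ
    have hψap : ∀ v, ψ v = (φ v i, φ v j) := fun v => rfl
    have hsurj : Function.Surjective ψ := by
      rintro ⟨a', b'⟩
      obtain ⟨v, hv1, hv2⟩ := codeMap_pair_surj F l d e i j hij a' b'
      rw [← hφ] at hv1 hv2
      exact ⟨v, by rw [hψap, hv1, hv2]⟩
    have himg : {x : Fin d → F | x ∈ C ∧ x i = a ∧ x j = b}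
        = ⇑φ '' {v | ψ v = (a, b)} := by
      ext xx
      simp only [Set.mem_setOf_eq, hCdef, LinearMap.mem_range]
      constructor
      · rintro ⟨⟨v, rfl⟩, h1, h2⟩
        exact ⟨v, by rw [Set.mem_setOf_eq, hψap, h1, h2], rfl⟩
      · rintro ⟨v, hv, rfl⟩
        rw [Set.mem_setOf_eq, hψap, Prod.mk.injEq] at hv
        exact ⟨⟨v, rfl⟩, hv.1, hv.2⟩
    rw [himg, Set.ncard_image_of_injective _ hinj]
    obtain ⟨v₀, hv₀⟩ := hsurj (a, b)
    have hcoset : {v | ψ v = (a, b)} = (fun u => v₀ + u) '' ((LinearMap.ker ψ : Set _)) := by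
      ext v
      simp only [Set.mem_setOf_eq, Set.mem_image, SetLike.mem_coe, LinearMap.mem_ker]
      constructor
      · intro hv
        exact ⟨v - v₀, by rw [map_sub, hv, hv₀, sub_self], by ring⟩
      · rintro ⟨u, hu, rfl⟩
        rw [map_add, hu, hv₀, add_zero]
    rw [hcoset, Set.ncard_image_of_injective _ (add_right_injective v₀),
      ← Nat.card_coe_set_eq]
    have hquot : Nat.card ((F × F × (Fin l → F)) ⧸ LinearMap.ker ψ) = q ^ 2 := by
      rw [Nat.card_congr (LinearMap.quotKerEquivOfSurjective ψ hsurj).toEquiv,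
        Nat.card_eq_fintype_card, Fintype.card_prod, hq]
      ring
    have hmul := Submodule.card_eq_card_quotient_mul_card (LinearMap.ker ψ)
    rw [hVcard, hquot] at hmul
    have hq2pos : 0 < q ^ 2 := by positivity
    have h5 : Nat.card (LinearMap.ker ψ) * q ^ 2 = q ^ l * q ^ 2 := by
      rw [← hmul, ← pow_add]
    have h6 := Nat.eq_of_mul_eq_mul_right hq2pos h5
    simpa using h6
  · -- probability bound
    rw [hCcard]
    clear hpart3 hsub hinj2 hle hScount hCdef hφ hinj hCcard hVcard hq e
    generalize hGdef : {x : Fin d → F | x ∈ C ∧ ∀ i, x i ≠ 1}.ncard = G at hG2 ⊢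
    have hQ3 : (3 : ℝ) ≤ (q : ℝ) := by exact_mod_cast hq3
    have hd4 : (d : ℝ) = ((q : ℝ) - 1) * (q : ℝ) ^ l := by
      rw [hd, Nat.cast_mul, Nat.cast_sub hq1, Nat.cast_pow, Nat.cast_one]
    have hQl : (1 : ℝ) ≤ (q : ℝ) ^ l := one_le_pow₀ (by linarith)
    have hQl0 : (0 : ℝ) ≤ (q : ℝ) ^ l := by positivity
    have hqq : q ≤ q ^ 2 := Nat.le_self_pow (by norm_num) q
    have hGQ : ((q : ℝ) ^ 2 - (q : ℝ) + 2) ≤ 2 * (G : ℝ) := by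
      have h := hG2
      have : ((q ^ 2 - q + 2 : ℕ) : ℝ) ≤ ((2 * G : ℕ) : ℝ) := by exact_mod_cast h
      rw [Nat.cast_add, Nat.cast_sub hqq] at this
      push_cast at this
      linarith
    have hden : (0 : ℝ) < (d : ℝ) + (q : ℝ) - 1 := by
      rw [hd4]
      nlinarith
    have hpow : (0 : ℝ) < ((q ^ (l + 2) : ℕ) : ℝ) := by positivity
    rw [div_le_div_iff₀ hden hpow]
    have hkey : (q : ℝ) ^ l * (q : ℝ) ^ 2 ≤ 3 * (G : ℝ) * ((q : ℝ) ^ l + 1) := by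
      have h1 : (0 : ℝ) ≤ ((q : ℝ) ^ 2 - 3 * (q : ℝ) + 6) * (q : ℝ) ^ l :=
        mul_nonneg (by nlinarith) hQl0
      have h2 : ((q : ℝ) ^ 2 - (q : ℝ) + 2) * (q : ℝ) ^ l ≤ 2 * (G : ℝ) * (q : ℝ) ^ l :=
        mul_le_mul_of_nonneg_right hGQ hQl0
      nlinarith [h1, h2, hGQ]
    have hmul2 := mul_le_mul_of_nonneg_left hkey
      (show (0 : ℝ) ≤ ((q : ℝ) - 1) / 3 by linarith)
    push_cast
    rw [hd4, pow_add]
    nlinarith [hmul2]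
end

section
/- For every integer d ≥ 3 and every real c ≥ 1 there exist a constant β > 0 and an integer N₀ such that for all N ≥ N₀, setting M = ⌈cN⌉, the following holds: under the uniform probability measure on functions f : [M] → ([N])^d, the probability that there exists a nonempty subset T ⊆ [M] with |T| ≤ βN whose neighbor set {i ∈ [N] : f(j)(t) = i for some j ∈ T and some t ∈ [d]} has fewer than (d − 7/5)·|T| elements is at most 1/2. (In other words, with probability at least 1/2 the random bipartite graph is a (≤ βN, d − 1.4)-expander from [M] to [N].) -/
set_option maxHeartbeats 1000000

open Finset

lemma chooseBound (n k : ℕ) (hk : 0 < k) :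
    (n.choose k : ℝ) ≤ ((n : ℝ) / k) ^ k * Real.exp k := by
  have h1 : (n.choose k : ℝ) ≤ ((n : ℝ) ^ k) / (k.factorial : ℝ) := by
    simpa using Nat.choose_le_pow_div (α := ℝ) k n
  have h2 : ((k : ℝ)) ^ k / (k.factorial : ℝ) ≤ Real.exp k :=
    Real.pow_div_factorial_le_exp (x := (k:ℝ)) (by positivity) k
  have hkpos : (0:ℝ) < (k:ℝ) := by exact_mod_cast hk
  have : ((n : ℝ) ^ k) / (k.factorial : ℝ)
      = ((n : ℝ) / k) ^ k * ((k:ℝ) ^ k / (k.factorial : ℝ)) := by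
    rw [div_pow]
    field_simp
  rw [this] at h1
  refine h1.trans ?_
  gcongr

lemma geomBound : ∀ K : ℕ, ∑ k ∈ Finset.Icc 1 K, (1/4:ℝ)^k ≤ 1/3 - (1/3)*(1/4)^K := by
  intro K
  induction K with
  | zero => simp
  | succ K ih =>
    rw [Finset.sum_Icc_succ_top (Nat.le_add_left 1 K)]
    have : (1/3 : ℝ) - (1/3)*(1/4)^(K+1) = (1/3 - (1/3)*(1/4)^K) + (1/4)^(K+1) := by
      ring
    rw [this]
    linarith

lemma cardE {M N d : ℕ} (T : Finset (Fin M)) (S : Finset (Fin N)) :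
    (Fintype.piFinset (fun j : Fin M =>
      if j ∈ T then Fintype.piFinset (fun _ : Fin d => S) else Finset.univ)).card
      = (S.card ^ d) ^ T.card * (N ^ d) ^ (M - T.card) := by
  rw [Fintype.card_piFinset]
  rw [← Finset.prod_mul_prod_compl T]
  have h1 : ∀ j ∈ T, (if j ∈ T then Fintype.piFinset (fun _ : Fin d => S) else
      (Finset.univ : Finset (Fin d → Fin N))).card = S.card ^ d := by
    intro j hj; rw [if_pos hj, Fintype.card_piFinset]; simp
  have h2 : ∀ j ∈ Tᶜ, (if j ∈ T then Fintype.piFinset (fun _ : Fin d => S) else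
      (Finset.univ : Finset (Fin d → Fin N))).card = N ^ d := by
    intro j hj
    rw [if_neg (Finset.mem_compl.mp hj)]
    simp [Finset.card_univ]
  rw [Finset.prod_congr rfl h1, Finset.prod_congr rfl h2, Finset.prod_const, Finset.prod_const,
    Finset.card_compl]
  simp

/-- For every `d ≥ 3` and `c ≥ 1` there are `β > 0` and `N₀` such that for `N ≥ N₀`
and `M = ⌈cN⌉`, with probability at least `1/2` (over each right vertex picking `d`
uniformly random left neighbors with replacement) every nonempty `T ⊆ [M]` with
`|T| ≤ βN` has at least `(d - 7/5)|T|` distinct neighbors in `[N]`. -/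
theorem stmt_6 : ∀ d : ℕ, 3 ≤ d → ∀ c : ℝ, 1 ≤ c →
    ∃ β : ℝ, 0 < β ∧ ∃ N₀ : ℕ, ∀ N : ℕ, N₀ ≤ N → ∀ M : ℕ, M = ⌈c * (N : ℝ)⌉₊ →
      (({f : Fin M → Fin d → Fin N | ∃ T : Finset (Fin M), T.Nonempty ∧
          (T.card : ℝ) ≤ β * N ∧
          ({i : Fin N | ∃ j ∈ T, ∃ t : Fin d, f j t = i}.ncard : ℝ) <
            ((d : ℝ) - 7 / 5) * T.card}.ncard : ℝ) /
        (Fintype.card (Fin M → Fin d → Fin N) : ℝ)) ≤ 1 / 2 := by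
  intro d hd c hc
  have had : (3:ℝ) ≤ (d:ℝ) := by exact_mod_cast hd
  obtain ⟨a, ha_def⟩ : ∃ a : ℝ, a = (d:ℝ) - 7/5 := ⟨_, rfl⟩
  have ha : (8/5 : ℝ) ≤ a := by rw [ha_def]; linarith
  have ha0 : (0:ℝ) < a := by linarith
  have hc0 : (0:ℝ) < c := by linarith
  obtain ⟨C0, hC0_def⟩ : ∃ x : ℝ, x = Real.exp (1 + a) * (2 * a * c) := ⟨_, rfl⟩
  have hC0 : 0 < C0 := by rw [hC0_def]; positivity
  obtain ⟨δ, hδ_def⟩ : ∃ x : ℝ, x = min 1 (1/(4*C0)) := ⟨_, rfl⟩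
  have hδ0 : 0 < δ := by rw [hδ_def]; exact lt_min one_pos (by positivity)
  have hδ1 : δ ≤ 1 := by rw [hδ_def]; exact min_le_left _ _
  have hr4 : C0 * δ ≤ 1/4 := by
    have h : δ ≤ 1/(4*C0) := by rw [hδ_def]; exact min_le_right _ _
    calc C0 * δ ≤ C0 * (1/(4*C0)) := by gcongr
      _ = 1/4 := by field_simp
  have hr0 : 0 ≤ C0 * δ := by positivity
  refine ⟨δ^3/a, by positivity, 1, ?_⟩
  intro N hN M hM
  have hN1 : (1:ℝ) ≤ (N:ℝ) := by exact_mod_cast hN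
  have hNpos : (0:ℝ) < (N:ℝ) := by linarith
  have hMN : N ≤ M := by
    rw [hM]
    calc N = ⌈(N:ℝ)⌉₊ := by simp
      _ ≤ ⌈c * (N:ℝ)⌉₊ := Nat.ceil_le_ceil (by nlinarith)
  have hM2 : (M:ℝ) ≤ 2*c*(N:ℝ) := by
    rw [hM]
    have h1 : (⌈c * (N:ℝ)⌉₊ : ℝ) < c * N + 1 := Nat.ceil_lt_add_one (by positivity)
    nlinarith
  obtain ⟨K, hK_def⟩ : ∃ x : ℕ, x = ⌊(δ^3/a)*(N:ℝ)⌋₊ := ⟨_, rfl⟩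
  obtain ⟨m, hm_def⟩ : ∃ x : ℕ → ℕ, x = fun k : ℕ => ⌈a*(k:ℝ)⌉₊ - 1 := ⟨_, rfl⟩
  -- facts about k ∈ Icc 1 K
  have hkβ : ∀ k : ℕ, k ≤ K → (k:ℝ) ≤ (δ^3/a)*(N:ℝ) := by
    intro k hk
    calc (k:ℝ) ≤ (K:ℝ) := by exact_mod_cast hk
      _ ≤ (δ^3/a)*(N:ℝ) := by rw [hK_def]; exact Nat.floor_le (by positivity)
  have hceil1 : ∀ k : ℕ, 1 ≤ k → 1 ≤ ⌈a*(k:ℝ)⌉₊ := by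
    intro k hk
    have : (0:ℝ) < a*(k:ℝ) := by
      have : (1:ℝ) ≤ (k:ℝ) := by exact_mod_cast hk
      nlinarith
    exact Nat.one_le_ceil_iff.mpr this
  have hm_lt : ∀ k : ℕ, 1 ≤ k → ((m k : ℕ):ℝ) < a*(k:ℝ) := by
    intro k hk
    have h1 := hceil1 k hk
    have hcast : ((m k : ℕ):ℝ) = (⌈a*(k:ℝ)⌉₊ : ℝ) - 1 := by
      simp only [hm_def]
      push_cast [Nat.cast_sub h1]
      ring
    have h2 : (⌈a*(k:ℝ)⌉₊ : ℝ) < a*(k:ℝ) + 1 := Nat.ceil_lt_add_one (by positivity)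
    rw [hcast]; linarith
  have hm1 : ∀ k : ℕ, 1 ≤ k → 1 ≤ m k := by
    intro k hk
    have hk1 : (1:ℝ) ≤ (k:ℝ) := by exact_mod_cast hk
    have h2 : 1 < ⌈a*(k:ℝ)⌉₊ := by
      apply Nat.lt_ceil.mpr
      push_cast
      nlinarith
    simp only [hm_def]
    omega
  have hmN : ∀ k : ℕ, 1 ≤ k → k ≤ K → m k ≤ N := by
    intro k hk hkK
    have h1 := hm_lt k hk
    have h2 := hkβ k hkK
    have hδ3 : δ^3 ≤ 1 := pow_le_one₀ hδ0.le hδ1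
    have : ((m k:ℕ):ℝ) ≤ (N:ℝ) := by
      have : a*(k:ℝ) ≤ δ^3*(N:ℝ) := by
        calc a*(k:ℝ) ≤ a*((δ^3/a)*(N:ℝ)) := by nlinarith
          _ = δ^3*(N:ℝ) := by field_simp
      nlinarith
    exact_mod_cast this
  have hkM : ∀ k : ℕ, 1 ≤ k → k ≤ K → k ≤ M := by
    intro k hk hkK
    have h2 := hkβ k hkK
    have hδ3 : δ^3 ≤ 1 := pow_le_one₀ hδ0.le hδ1
    have : (k:ℝ) ≤ (N:ℝ) := by
      have haa : δ^3/a ≤ 1 := by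
        rw [div_le_one ha0]; linarith
      nlinarith
    have : k ≤ N := by exact_mod_cast this
    omega
  -- the covering union
  obtain ⟨E, hE_def⟩ : ∃ x : Finset (Fin M) → Finset (Fin N) → Finset (Fin M → Fin d → Fin N),
      x = fun T S => Fintype.piFinset (fun j : Fin M =>
        if j ∈ T then Fintype.piFinset (fun _ : Fin d => S) else Finset.univ) := ⟨_, rfl⟩
  obtain ⟨U, hU_def⟩ : ∃ x : Finset (Fin M → Fin d → Fin N),
      x = (Finset.Icc 1 K).biUnion (fun k =>
        (Finset.powersetCard k (Finset.univ : Finset (Fin M))).biUnion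
          (fun T => (Finset.powersetCard (m k) (Finset.univ : Finset (Fin N))).biUnion
            (fun S => E T S))) := ⟨_, rfl⟩
  -- step 1 : the bad set is covered
  have hsubset : {f : Fin M → Fin d → Fin N | ∃ T : Finset (Fin M), T.Nonempty ∧
          (T.card : ℝ) ≤ (δ^3/a) * N ∧
          ({i : Fin N | ∃ j ∈ T, ∃ t : Fin d, f j t = i}.ncard : ℝ) <
            ((d : ℝ) - 7 / 5) * T.card} ⊆ ↑U := by
    intro f hf
    obtain ⟨T, hTne, hTcard, hTexp⟩ := hf
    obtain ⟨k, hk_def⟩ : ∃ x : ℕ, x = T.card := ⟨_, rfl⟩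
    have hk1 : 1 ≤ k := hk_def ▸ Finset.card_pos.mpr hTne
    have hkK : k ≤ K := by
      rw [hK_def, hk_def]
      exact Nat.le_floor hTcard
    obtain ⟨G, hG_def⟩ : ∃ x : Finset (Fin N),
      x = T.biUnion (fun j => Finset.image (f j) Finset.univ) := ⟨_, rfl⟩
    have hGset : {i : Fin N | ∃ j ∈ T, ∃ t : Fin d, f j t = i} = ↑G := by
      ext i
      simp [hG_def]
    have hG : (G.card : ℝ) < a * k := by
      rw [hGset, Set.ncard_coe_finset] at hTexp
      rw [ha_def, hk_def]
      exact_mod_cast hTexp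
    have hGm : G.card ≤ m k := by
      have h1 : G.card < ⌈a*(k:ℝ)⌉₊ := Nat.lt_ceil.mpr hG
      have h2 := hceil1 k hk1
      simp only [hm_def]
      omega
    have hmNk : m k ≤ (Finset.univ : Finset (Fin N)).card := by
      rw [Finset.card_univ, Fintype.card_fin]
      exact hmN k hk1 hkK
    obtain ⟨S, hGS, _, hScard⟩ :=
      Finset.exists_subsuperset_card_eq (Finset.subset_univ G) hGm hmNk
    rw [Finset.mem_coe, hU_def]
    rw [Finset.mem_biUnion]
    refine ⟨k, Finset.mem_Icc.mpr ⟨hk1, hkK⟩, ?_⟩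
    rw [Finset.mem_biUnion]
    refine ⟨T, by simp [Finset.mem_powersetCard_univ, hk_def], ?_⟩
    rw [Finset.mem_biUnion]
    refine ⟨S, by simp [Finset.mem_powersetCard_univ, hScard], ?_⟩
    rw [hE_def]
    rw [Fintype.mem_piFinset]
    intro j
    by_cases hj : j ∈ T
    · rw [if_pos hj, Fintype.mem_piFinset]
      intro t
      apply hGS
      rw [hG_def, Finset.mem_biUnion]
      exact ⟨j, hj, Finset.mem_image.mpr ⟨t, Finset.mem_univ t, rfl⟩⟩
    · rw [if_neg hj]
      exact Finset.mem_univ _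
  -- step 2 : cardinality of the union
  have hUcard : U.card ≤ ∑ k ∈ Finset.Icc 1 K,
      M.choose k * (N.choose (m k) * (((m k)^d)^k * (N^d)^(M-k))) := by
    rw [hU_def]
    refine (Finset.card_biUnion_le).trans (Finset.sum_le_sum ?_)
    intro k _
    refine (Finset.card_biUnion_le).trans ?_
    have hsum : ∀ T ∈ Finset.powersetCard k (Finset.univ : Finset (Fin M)),
        ((Finset.powersetCard (m k) (Finset.univ : Finset (Fin N))).biUnion
          (fun S => E T S)).card ≤ N.choose (m k) * (((m k)^d)^k * (N^d)^(M-k)) := by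
      intro T hT
      have hTk : T.card = k := (Finset.mem_powersetCard_univ).mp hT
      refine (Finset.card_biUnion_le).trans ?_
      have : ∀ S ∈ Finset.powersetCard (m k) (Finset.univ : Finset (Fin N)),
          (E T S).card = ((m k)^d)^k * (N^d)^(M-k) := by
        intro S hS
        have hSm : S.card = m k := (Finset.mem_powersetCard_univ).mp hS
        rw [hE_def, cardE, hSm, hTk]
      rw [Finset.sum_congr rfl this, Finset.sum_const, Finset.card_powersetCard,
        Finset.card_univ, Fintype.card_fin, smul_eq_mul]
    calc ∑ T ∈ Finset.powersetCard k (Finset.univ : Finset (Fin M)),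
          ((Finset.powersetCard (m k) (Finset.univ : Finset (Fin N))).biUnion
            (fun S => E T S)).card
        ≤ ∑ _T ∈ Finset.powersetCard k (Finset.univ : Finset (Fin M)),
            N.choose (m k) * (((m k)^d)^k * (N^d)^(M-k)) := Finset.sum_le_sum hsum
      _ = M.choose k * (N.choose (m k) * (((m k)^d)^k * (N^d)^(M-k))) := by
          rw [Finset.sum_const, Finset.card_powersetCard, Finset.card_univ, Fintype.card_fin,
            smul_eq_mul]
  -- step 3 : per-term real bound
  have hterm : ∀ k ∈ Finset.Icc 1 K,
      ((M.choose k * (N.choose (m k) * (((m k)^d)^k * (N^d)^(M-k))) : ℕ) : ℝ)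
        ≤ (C0*δ)^k * ((N:ℝ)^(d*M)) := by
    intro k hkmem
    obtain ⟨hk1, hkK⟩ := Finset.mem_Icc.mp hkmem
    have hkR : (1:ℝ) ≤ (k:ℝ) := by exact_mod_cast hk1
    have hkR0 : (0:ℝ) < (k:ℝ) := by linarith
    have hmk1 := hm1 k hk1
    have hmR : (0:ℝ) < ((m k : ℕ):ℝ) := by exact_mod_cast hmk1
    have hmlt := hm_lt k hk1
    have hkb := hkβ k hkK
    have hkMk := hkM k hk1 hkK
    -- nat arithmetic facts
    have hmdk : m k + k ≤ d*k := by
      have : ((m k:ℕ):ℝ) + k ≤ (d:ℝ)*k := by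
        have : a + 1 ≤ (d:ℝ) := by rw [ha_def]; linarith
        nlinarith
      exact_mod_cast this
    set E2 : ℕ := d*k - m k - k with hE2_def
    have hsplit : d*k = m k + (k + E2) := by omega
    have hE2R : (E2:ℝ) = (d:ℝ)*k - (m k:ℕ) - k := by
      have : (E2:ℕ) + m k + k = d*k := by omega
      have := congrArg (fun x : ℕ => (x:ℝ)) this
      push_cast at this
      linarith
    have hk3E2 : k ≤ 3*E2 := by
      have h1 : (k:ℝ) ≤ 3*(E2:ℝ) := by
        rw [hE2R]
        have : a + 1 ≤ (d:ℝ) - 2/5 := by rw [ha_def]; linarith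
        nlinarith
      exact_mod_cast h1
    -- base bound
    have hb : ((m k:ℕ):ℝ)/(N:ℝ) ≤ δ^3 := by
      rw [div_le_iff₀ hNpos]
      have h1 : a*(k:ℝ) ≤ δ^3*(N:ℝ) := by
        have := mul_le_mul_of_nonneg_left hkb ha0.le
        calc a*(k:ℝ) ≤ a*((δ^3/a)*(N:ℝ)) := this
          _ = δ^3*(N:ℝ) := by field_simp
      linarith
    have hb0 : (0:ℝ) ≤ ((m k:ℕ):ℝ)/(N:ℝ) := by positivity
    -- normalized bound
    have hkey : (M.choose k : ℝ) * (N.choose (m k) : ℝ) * (((m k:ℕ):ℝ)/(N:ℝ))^(d*k)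
        ≤ (C0*δ)^k := by
      have hcM := chooseBound M k hk1
      have hcN := chooseBound N (m k) hmk1
      calc (M.choose k : ℝ) * (N.choose (m k) : ℝ) * (((m k:ℕ):ℝ)/(N:ℝ))^(d*k)
          ≤ (((M:ℝ)/k)^k * Real.exp k) * (((N:ℝ)/(m k:ℕ))^(m k) * Real.exp (m k))
              * (((m k:ℕ):ℝ)/(N:ℝ))^(d*k) := by
            have h1 : (0:ℝ) ≤ (((m k:ℕ):ℝ)/(N:ℝ))^(d*k) := by positivity
            have h2 : (0:ℝ) ≤ (N.choose (m k) : ℝ) := by positivity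
            have h3 : (0:ℝ) ≤ (M.choose k : ℝ) := by positivity
            have h4 : (0:ℝ) ≤ ((M:ℝ)/k)^k * Real.exp k := by positivity
            nlinarith [mul_le_mul hcM hcN h2 h4]
        _ = (((M:ℝ)/k)^k * (((m k:ℕ):ℝ)/(N:ℝ))^k)
              * ((((N:ℝ)/(m k:ℕ))^(m k)) * (((m k:ℕ):ℝ)/(N:ℝ))^(m k))
              * (Real.exp k * Real.exp (m k))
              * (((m k:ℕ):ℝ)/(N:ℝ))^E2 := by
            rw [hsplit, pow_add, pow_add]
            ring
        _ = ((M:ℝ)*((m k:ℕ):ℝ)/((k:ℝ)*(N:ℝ)))^k * 1 * Real.exp ((k:ℝ) + (m k:ℕ))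
              * (((m k:ℕ):ℝ)/(N:ℝ))^E2 := by
            have e1 : (M:ℝ)/(k:ℝ) * (((m k:ℕ):ℝ)/(N:ℝ))
                = (M:ℝ)*((m k:ℕ):ℝ)/((k:ℝ)*(N:ℝ)) := by
              rw [div_mul_div_comm]
            have e2 : (N:ℝ)/((m k:ℕ):ℝ) * (((m k:ℕ):ℝ)/(N:ℝ)) = 1 := by
              field_simp
            rw [← mul_pow, ← mul_pow, ← Real.exp_add, e1, e2, one_pow]
        _ ≤ (2*a*c)^k * 1 * (Real.exp (1+a))^k * δ^k := by
            have hbase : (M:ℝ)*((m k:ℕ):ℝ)/((k:ℝ)*(N:ℝ)) ≤ 2*a*c := by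
              rw [div_le_iff₀ (by positivity)]
              nlinarith [hmlt, hM2, hkR0, hNpos, hc0, ha0]
            have hbase0 : (0:ℝ) ≤ (M:ℝ)*((m k:ℕ):ℝ)/((k:ℝ)*(N:ℝ)) := by positivity
            have hexp : Real.exp ((k:ℝ) + (m k:ℕ)) ≤ (Real.exp (1+a))^k := by
              rw [← Real.exp_nat_mul]
              apply Real.exp_le_exp.mpr
              nlinarith [hmlt]
            have hpow : (((m k:ℕ):ℝ)/(N:ℝ))^E2 ≤ δ^k := by
              calc (((m k:ℕ):ℝ)/(N:ℝ))^E2 ≤ (δ^3)^E2 := by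
                    exact pow_le_pow_left₀ hb0 hb E2
                _ = δ^(3*E2) := by rw [← pow_mul]
                _ ≤ δ^k := pow_le_pow_of_le_one hδ0.le hδ1 hk3E2
            have h1 : (0:ℝ) ≤ Real.exp ((k:ℝ) + (m k:ℕ)) := Real.exp_nonneg _
            have h2 : (0:ℝ) ≤ ((M:ℝ)*((m k:ℕ):ℝ)/((k:ℝ)*(N:ℝ)))^k := by positivity
            have h3 : (0:ℝ) ≤ (((m k:ℕ):ℝ)/(N:ℝ))^E2 := by positivity
            have h4 : (0:ℝ) ≤ (2*a*c)^k := by positivity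
            have h5 : ((M:ℝ)*((m k:ℕ):ℝ)/((k:ℝ)*(N:ℝ)))^k ≤ (2*a*c)^k :=
              pow_le_pow_left₀ hbase0 hbase k
            have h6 : (0:ℝ) ≤ (Real.exp (1+a))^k := by positivity
            exact mul_le_mul (mul_le_mul (by simpa using h5) hexp h1 (by positivity))
              hpow h3 (by positivity)
        _ = (C0*δ)^k := by
            rw [hC0_def, mul_one]
            rw [← mul_pow, ← mul_pow]
            ring
    -- un-normalize
    have hdM : d*k + d*(M-k) = d*M := by
      have h : k + (M - k) = M := by omega
      calc d*k + d*(M-k) = d*(k + (M-k)) := by ring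
        _ = d*M := by rw [h]
    have hcast : ((M.choose k * (N.choose (m k) * (((m k)^d)^k * (N^d)^(M-k))) : ℕ) : ℝ)
        = (M.choose k : ℝ) * ((N.choose (m k) : ℝ)
            * (((m k:ℕ):ℝ)^(d*k) * (N:ℝ)^(d*(M-k)))) := by
      push_cast
      rw [← pow_mul, ← pow_mul]
    rw [hcast]
    have hmain : ((m k:ℕ):ℝ)^(d*k) = (((m k:ℕ):ℝ)/(N:ℝ))^(d*k) * (N:ℝ)^(d*k) := by
      rw [div_pow]
      field_simp
    calc (M.choose k : ℝ) * ((N.choose (m k) : ℝ)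
            * (((m k:ℕ):ℝ)^(d*k) * (N:ℝ)^(d*(M-k))))
        = ((M.choose k : ℝ) * (N.choose (m k) : ℝ) * (((m k:ℕ):ℝ)/(N:ℝ))^(d*k))
            * ((N:ℝ)^(d*k) * (N:ℝ)^(d*(M-k))) := by
          rw [hmain]
          ring
      _ ≤ (C0*δ)^k * ((N:ℝ)^(d*k) * (N:ℝ)^(d*(M-k))) :=
          mul_le_mul_of_nonneg_right hkey (by positivity)
      _ = (C0*δ)^k * (N:ℝ)^(d*M) := by rw [← pow_add, hdM]
  -- step 4 : assemble
  have hFnat : Fintype.card (Fin M → Fin d → Fin N) = N^(d*M) := by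
    rw [Fintype.card_fun, Fintype.card_fun, Fintype.card_fin, Fintype.card_fin,
      Fintype.card_fin, ← pow_mul]
  have hFcard : (Fintype.card (Fin M → Fin d → Fin N) : ℝ) = (N:ℝ)^(d*M) := by
    rw [hFnat]
    push_cast
    ring
  rw [hFcard]
  rw [div_le_iff₀ (by positivity)]
  have hBadU : (({f : Fin M → Fin d → Fin N | ∃ T : Finset (Fin M), T.Nonempty ∧
          (T.card : ℝ) ≤ (δ^3/a) * N ∧
          ({i : Fin N | ∃ j ∈ T, ∃ t : Fin d, f j t = i}.ncard : ℝ) <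
            ((d : ℝ) - 7 / 5) * T.card}.ncard : ℝ)) ≤ (U.card : ℝ) := by
    have := Set.ncard_le_ncard hsubset (Finset.finite_toSet U)
    rw [Set.ncard_coe_finset] at this
    exact_mod_cast this
  refine hBadU.trans ?_
  have h1 : (U.card : ℝ) ≤ ∑ k ∈ Finset.Icc 1 K,
      ((M.choose k * (N.choose (m k) * (((m k)^d)^k * (N^d)^(M-k))) : ℕ) : ℝ) := by
    have := hUcard
    push_cast
    exact_mod_cast this
  refine h1.trans ?_
  have h2 : ∑ k ∈ Finset.Icc 1 K,
      ((M.choose k * (N.choose (m k) * (((m k)^d)^k * (N^d)^(M-k))) : ℕ) : ℝ)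
      ≤ ∑ k ∈ Finset.Icc 1 K, (C0*δ)^k * ((N:ℝ)^(d*M)) := Finset.sum_le_sum hterm
  refine h2.trans ?_
  rw [← Finset.sum_mul]
  have h3 : ∑ k ∈ Finset.Icc 1 K, (C0*δ)^k ≤ 1/2 := by
    calc ∑ k ∈ Finset.Icc 1 K, (C0*δ)^k ≤ ∑ k ∈ Finset.Icc 1 K, (1/4:ℝ)^k := by
          apply Finset.sum_le_sum
          intro k _
          exact pow_le_pow_left₀ hr0 hr4 k
      _ ≤ 1/3 - (1/3)*(1/4)^K := geomBound K
      _ ≤ 1/2 := by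
          have : (0:ℝ) ≤ (1/4)^K := by positivity
          linarith
  calc (∑ k ∈ Finset.Icc 1 K, (C0*δ)^k) * (N:ℝ)^(d*M)
      ≤ (1/2) * (N:ℝ)^(d*M) := by
        apply mul_le_mul_of_nonneg_right h3 (by positivity)
    _ = 1/2 * (N:ℝ)^(d*M) := by ring
end

section
/- Let G be a bipartite graph on [N] ∪ [M] in which every vertex j ∈ [M] has exactly d ≥ 1 neighbors Γ(j) ⊆ [N]. Let ρ ∈ (0,1) with r = ρN an integer and let Δ ∈ [0,1]. If there exists a subset S ⊆ [N] with |S| = r and |Γ(S)| ≤ (1−Δ)M, then there exist real numbers v_1,…,v_N with |v_i| ≤ 1 for all i, Σ_{i=1}^N v_i = 0, and Σ_{j=1}^M ((1/d)·Σ_{i ∈ Γ(j)} v_i)² ≥ min{(ρ/(1−ρ))², 1}·Δ·M. -/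
open Finset

/-- Counting helper: if `v` equals `c` off `S` and the set of `j` seeing `S` has
real size at most `(1-Δ)M`, then the quadratic sum is at least `c²ΔM`. -/
lemma sdp_aux (N M d : ℕ) (hd : 1 ≤ d) (Γ : Fin M → Finset (Fin N))
    (hΓ : ∀ j, (Γ j).card = d)
    (S : Finset (Fin N)) (v : Fin N → ℝ) (c : ℝ)
    (hv : ∀ i, i ∉ S → v i = c) (Δ : ℝ)
    (hexp : ({j : Fin M | ∃ i ∈ S, i ∈ Γ j}.ncard : ℝ) ≤ (1 - Δ) * M) :
    c ^ 2 * Δ * M ≤ ∑ j, ((1 / (d : ℝ)) * ∑ i ∈ Γ j, v i) ^ 2 := by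
  classical
  set B : Finset (Fin M) := Finset.univ.filter (fun j => ∃ i ∈ S, i ∈ Γ j) with hB
  have hncard : ({j : Fin M | ∃ i ∈ S, i ∈ Γ j}.ncard : ℕ) = B.card := by
    rw [Set.ncard_eq_toFinset_card', Set.toFinset_setOf]
  have hBcard : (B.card : ℝ) ≤ (1 - Δ) * M := by rw [← hncard]; exact hexp
  have hTcard : Δ * M ≤ ((Bᶜ).card : ℝ) := by
    have : (Bᶜ).card = M - B.card := by
      rw [Finset.card_compl, Fintype.card_fin]
    have hle : B.card ≤ M := by
      simpa using Finset.card_le_card (Finset.subset_univ B)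
    rw [this, Nat.cast_sub hle]
    linarith
  have hd0 : (d : ℝ) ≠ 0 := by positivity
  have hterm : ∀ j ∈ Bᶜ, ((1 / (d : ℝ)) * ∑ i ∈ Γ j, v i) ^ 2 = c ^ 2 := by
    intro j hj
    have hj' : ¬ ∃ i ∈ S, i ∈ Γ j := by
      simpa [hB, Finset.mem_compl, Finset.mem_filter] using hj
    have hsum : ∑ i ∈ Γ j, v i = d * c := by
      rw [Finset.sum_congr rfl (fun i hi => hv i (fun hiS => hj' ⟨i, hiS, hi⟩))]
      simp [hΓ j, mul_comm]
    rw [hsum]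
    field_simp
  calc c ^ 2 * Δ * M ≤ c ^ 2 * ((Bᶜ).card : ℝ) := by
        nlinarith [sq_nonneg c, hTcard]
    _ = ∑ j ∈ Bᶜ, ((1 / (d : ℝ)) * ∑ i ∈ Γ j, v i) ^ 2 := by
        rw [Finset.sum_congr rfl hterm]; simp [mul_comm]
    _ ≤ ∑ j, ((1 / (d : ℝ)) * ∑ i ∈ Γ j, v i) ^ 2 := by
        apply Finset.sum_le_sum_of_subset_of_nonneg (Finset.subset_univ _)
        intro j _ _; positivity

/-- SDP value lower bound: if some `ρN`-subset `S ⊆ [N]` has neighbor set of size at most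
`(1-Δ)M` in a bipartite graph with right degree `d`, then there are reals `v_i` with
`|v_i| ≤ 1`, `Σ v_i = 0`, and `Σ_j ((1/d)Σ_{i∈Γ(j)} v_i)² ≥ min{(ρ/(1-ρ))², 1}·Δ·M`. -/
theorem stmt_7 (N M d : ℕ) (hd : 1 ≤ d) (Γ : Fin M → Finset (Fin N))
    (hΓ : ∀ j, (Γ j).card = d) (ρ : ℝ) (hρ0 : 0 < ρ) (hρ1 : ρ < 1)
    (r : ℕ) (hr : (r : ℝ) = ρ * N) (Δ : ℝ) (hΔ0 : 0 ≤ Δ) (hΔ1 : Δ ≤ 1)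
    (S : Finset (Fin N)) (hS : S.card = r)
    (hexp : ({j : Fin M | ∃ i ∈ S, i ∈ Γ j}.ncard : ℝ) ≤ (1 - Δ) * M) :
    ∃ v : Fin N → ℝ, (∀ i, |v i| ≤ 1) ∧ (∑ i, v i = 0) ∧
      min ((ρ / (1 - ρ)) ^ 2) 1 * Δ * M ≤
        ∑ j, ((1 / (d : ℝ)) * ∑ i ∈ Γ j, v i) ^ 2 := by
  classical
  rcases Nat.eq_zero_or_pos N with hN | hN
  · -- N = 0 forces M = 0
    have hM : M = 0 := by
      by_contra hM
      have j : Fin M := ⟨0, Nat.pos_of_ne_zero hM⟩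
      have := hΓ j
      have h1 : (Γ j).card ≤ N := by
        simpa using Finset.card_le_card (Finset.subset_univ (Γ j))
      omega
    refine ⟨0, by simp, by simp, ?_⟩
    subst hM
    simp
  -- N > 0
  have h1ρ : (0:ℝ) < 1 - ρ := by linarith
  have hNpos : (0:ℝ) < N := by exact_mod_cast hN
  have hrltN : (r:ℝ) < N := by rw [hr]; nlinarith
  have hrleN : r ≤ N := by exact_mod_cast hrltN.le
  have hcardc : ((Sᶜ).card : ℝ) = (N:ℝ) - r := by
    rw [Finset.card_compl, Fintype.card_fin, hS, Nat.cast_sub hrleN]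
  have hΔM : (0:ℝ) ≤ Δ * M := by positivity
  rcases le_or_gt ρ (1/2) with hhalf | hhalf
  · -- ρ ≤ 1/2 : v = -1 on S, ρ/(1-ρ) off S
    set c : ℝ := ρ / (1 - ρ) with hc
    have hc0 : 0 ≤ c := by positivity
    have hc1 : c ≤ 1 := by rw [hc, div_le_one h1ρ]; linarith
    refine ⟨fun i => if i ∈ S then -1 else c, ?_, ?_, ?_⟩
    · intro i
      by_cases hi : i ∈ S <;> simp [hi, abs_of_nonneg, hc0, hc1]
    · rw [← Finset.sum_add_sum_compl S]
      have h1 : ∑ i ∈ S, (if i ∈ S then (-1:ℝ) else c) = -r := by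
        rw [Finset.sum_congr rfl (fun i hi => if_pos hi)]
        simp [hS]
      have h2 : ∑ i ∈ Sᶜ, (if i ∈ S then (-1:ℝ) else c) = ((N:ℝ) - r) * c := by
        rw [Finset.sum_congr rfl (fun i hi => if_neg (Finset.mem_compl.mp hi))]
        simp [hcardc]
      rw [h1, h2, hr, hc]
      field_simp
      ring
    · have hmin : min ((ρ / (1 - ρ)) ^ 2) 1 = c ^ 2 := by
        apply min_eq_left
        nlinarith
      rw [hmin]
      exact sdp_aux N M d hd Γ hΓ S _ c (fun i hi => if_neg hi) Δ hexp
  · -- ρ > 1/2 : v = 1 off S, -(N-r)/r on S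
    have hr0 : (0:ℝ) < r := by rw [hr]; positivity
    set a : ℝ := -(((N:ℝ) - r) / r) with ha
    have haN : (N:ℝ) - r ≤ r := by rw [hr]; nlinarith
    have hale : |a| ≤ 1 := by
      rw [ha, abs_neg, abs_div, abs_of_nonneg (by linarith : (0:ℝ) ≤ (N:ℝ) - r),
        abs_of_pos hr0, div_le_one hr0]
      exact haN
    refine ⟨fun i => if i ∈ S then a else 1, ?_, ?_, ?_⟩
    · intro i
      by_cases hi : i ∈ S <;> simp [hi, hale]
    · rw [← Finset.sum_add_sum_compl S]
      have h1 : ∑ i ∈ S, (if i ∈ S then a else (1:ℝ)) = r * a := by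
        rw [Finset.sum_congr rfl (fun i hi => if_pos hi)]
        simp [hS, mul_comm]
      have h2 : ∑ i ∈ Sᶜ, (if i ∈ S then a else (1:ℝ)) = (N:ℝ) - r := by
        rw [Finset.sum_congr rfl (fun i hi => if_neg (Finset.mem_compl.mp hi))]
        simp [hcardc]
      rw [h1, h2, ha]
      field_simp
      ring
    · have hmin : min ((ρ / (1 - ρ)) ^ 2) 1 ≤ 1 := min_le_right _ _
      have := sdp_aux N M d hd Γ hΓ S (fun i => if i ∈ S then a else 1) 1
        (fun i hi => if_neg hi) Δ hexp
      nlinarith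
end

section
/- There exist universal constants C₁ > 0 and c > 0 with the following property. Let d ≥ 2 be an integer, let G be a bipartite graph on [N] ∪ [M] in which every j ∈ [M] has exactly d neighbors Γ(j) ⊆ [N], let H be a finite-dimensional real inner product space, and let v_1,…,v_N ∈ H satisfy ‖v_i‖ ≤ 1 for all i and Σ_{i=1}^N v_i = 0. If δ := Σ_{j=1}^M ‖(1/d)·Σ_{i∈Γ(j)} v_i‖² ≥ M/d, then there exist real numbers z_1,…,z_N ∈ [−1,1] such that |Σ_{i=1}^N z_i| ≤ C₁·N/d and Σ_{j=1}^M ((1/d)·Σ_{i∈Γ(j)} z_i)² ≥ c·δ/log d (natural logarithm). -/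
open Finset

namespace Stmt8Aux

noncomputable def sg (b : Bool) : ℝ := if b then 1 else -1

lemma sum_pi_prod {k : ℕ} (F : Fin k → Bool → ℝ) :
    ∑ ε : Fin k → Bool, ∏ m, F m (ε m) = ∏ m, ∑ b : Bool, F m b := by
  rw [Finset.prod_univ_sum, Fintype.piFinset_univ]

lemma sum_sg_mul (k : ℕ) (m m' : Fin k) :
    ∑ ε : Fin k → Bool, sg (ε m) * sg (ε m') =
      if m = m' then (2 : ℝ) ^ k else 0 := by
  have hrep : ∀ ε : Fin k → Bool, sg (ε m) * sg (ε m') =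
      ∏ r, ((if r = m then sg (ε r) else 1) * (if r = m' then sg (ε r) else 1)) := by
    intro ε
    rw [Finset.prod_mul_distrib, Finset.prod_ite_eq' Finset.univ m (fun r => sg (ε r)),
      Finset.prod_ite_eq' Finset.univ m' (fun r => sg (ε r))]
    simp
  simp only [hrep]
  rw [sum_pi_prod (fun r b => (if r = m then sg b else 1) * (if r = m' then sg b else 1))]
  by_cases h : m = m'
  · subst h
    rw [if_pos rfl]
    have h2 : ∀ r : Fin k,
        (∑ b : Bool, ((if r = m then sg b else 1) * (if r = m then sg b else 1))) = 2 := by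
      intro r
      by_cases hr : r = m <;> simp [hr, sg] <;> norm_num
    rw [Finset.prod_congr rfl (fun r _ => h2 r)]
    simp
  · rw [if_neg h]
    apply Finset.prod_eq_zero (Finset.mem_univ m)
    simp [h, sg]

lemma sum_sq_lin {k : ℕ} (c : Fin k → ℝ) :
    ∑ ε : Fin k → Bool, (∑ m, sg (ε m) * c m) ^ 2 = (2:ℝ) ^ k * ∑ m, c m ^ 2 := by
  have expand : ∀ ε : Fin k → Bool, (∑ m, sg (ε m) * c m) ^ 2
      = ∑ m, ∑ m', (sg (ε m) * sg (ε m')) * (c m * c m') := by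
    intro ε
    rw [sq, Finset.sum_mul_sum]
    exact Finset.sum_congr rfl fun m _ => Finset.sum_congr rfl fun m' _ => by ring
  simp only [expand]
  rw [Finset.sum_comm]
  have h1 : ∀ m : Fin k, ∑ ε : Fin k → Bool, ∑ m', (sg (ε m) * sg (ε m')) * (c m * c m')
      = ∑ m', (if m = m' then (2:ℝ)^k else 0) * (c m * c m') := by
    intro m
    rw [Finset.sum_comm]
    refine Finset.sum_congr rfl fun m' _ => ?_
    rw [← Finset.sum_mul, sum_sg_mul]
  rw [Finset.sum_congr rfl fun m _ => h1 m]
  rw [Finset.mul_sum]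
  refine Finset.sum_congr rfl fun m _ => ?_
  rw [Finset.sum_eq_single m]
  · simp [sq]
  · intro m' _ hne
    simp [Ne.symm hne]
  · simp

lemma sum_exp_lin {k : ℕ} (c : Fin k → ℝ) (l : ℝ) :
    ∑ ε : Fin k → Bool, Real.exp (l * ∑ m, sg (ε m) * c m)
      ≤ (2:ℝ) ^ k * Real.exp (l ^ 2 * (∑ m, c m ^ 2) / 2) := by
  have hrep : ∀ ε : Fin k → Bool, Real.exp (l * ∑ m, sg (ε m) * c m)
      = ∏ m, Real.exp (l * (sg (ε m) * c m)) := by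
    intro ε
    rw [← Real.exp_sum, ← Finset.mul_sum]
  simp only [hrep]
  rw [sum_pi_prod (fun m b => Real.exp (l * (sg b * c m)))]
  have h1 : ∀ m : Fin k, ∑ b : Bool, Real.exp (l * (sg b * c m))
      ≤ 2 * Real.exp ((l * c m) ^ 2 / 2) := by
    intro m
    have hc := Real.cosh_le_exp_half_sq (l * c m)
    rw [Real.cosh_eq] at hc
    have hs : ∑ b : Bool, Real.exp (l * (sg b * c m))
        = Real.exp (l * c m) + Real.exp (-(l * c m)) := by
      rw [Fintype.sum_bool]
      simp only [sg]
      norm_num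
    rw [hs]
    linarith
  calc (∏ m, ∑ b : Bool, Real.exp (l * (sg b * c m)))
      ≤ ∏ m, 2 * Real.exp ((l * c m) ^ 2 / 2) :=
        Finset.prod_le_prod (fun m _ => by positivity) (fun m _ => h1 m)
    _ = (2:ℝ)^k * Real.exp (l ^ 2 * (∑ m, c m ^ 2) / 2) := by
        rw [Finset.prod_mul_distrib, Finset.prod_const, ← Real.exp_sum]
        congr 1
        · simp
        · simp_rw [mul_pow]
          rw [← Finset.sum_div, ← Finset.mul_sum]

lemma exp_bounds {L s : ℝ} (hL : 2 ≤ L) (hs : 0 ≤ s) :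
    s ≤ Real.exp (L * s) ∧ s ^ 2 ≤ Real.exp (L * s) := by
  have h2 := Real.add_one_le_exp (L * s / 2)
  have e2 : Real.exp (L * s) = Real.exp (L * s / 2) * Real.exp (L * s / 2) := by
    rw [← Real.exp_add]; ring_nf
  have hge : s + 1 ≤ Real.exp (L * s / 2) := by nlinarith
  have hp := Real.exp_pos (L * s / 2)
  constructor
  · nlinarith
  · nlinarith

noncomputable def clamp (x : ℝ) : ℝ := max (-1) (min 1 x)

lemma clamp_mem (x : ℝ) : clamp x ∈ Set.Icc (-1:ℝ) 1 :=
  ⟨le_max_left _ _, max_le (by norm_num) (min_le_left _ _)⟩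

lemma clamp_err {L x : ℝ} (hL : 2 ≤ L) :
    |clamp x - x| ≤ Real.exp (L * (|x| - 1)) ∧
    (clamp x - x) ^ 2 ≤ Real.exp (L * (|x| - 1)) := by
  rcases le_total x (-1) with h | h
  · have hc : clamp x = -1 := by
      unfold clamp
      rw [min_eq_right (by linarith), max_eq_left h]
    have habs : |x| = -x := abs_of_nonpos (by linarith)
    have hs : (0:ℝ) ≤ -x - 1 := by linarith
    obtain ⟨e1, e2⟩ := exp_bounds hL hs
    rw [hc, habs]
    constructor
    · rw [abs_of_nonneg (by linarith : (0:ℝ) ≤ -1 - x)]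
      calc (-1 - x : ℝ) = -x - 1 := by ring
        _ ≤ Real.exp (L * (-x - 1)) := e1
    · calc ((-1 - x : ℝ)) ^ 2 = (-x - 1) ^ 2 := by ring
        _ ≤ Real.exp (L * (-x - 1)) := e2
  rcases le_total x 1 with h1 | h1
  · have hc : clamp x = x := by
      unfold clamp
      rw [min_eq_right h1, max_eq_right h]
    rw [hc]
    simp [Real.exp_nonneg]
  · have hc : clamp x = 1 := by
      unfold clamp
      rw [min_eq_left h1, max_eq_right (by norm_num)]
    have habs : |x| = x := abs_of_nonneg (by linarith)
    have hs : (0:ℝ) ≤ x - 1 := by linarith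
    obtain ⟨e1, e2⟩ := exp_bounds hL hs
    rw [hc, habs]
    constructor
    · rw [abs_sub_comm, abs_of_nonneg hs]
      exact e1
    · calc ((1 - x : ℝ)) ^ 2 = (x - 1) ^ 2 := by ring
        _ ≤ Real.exp (L * (x - 1)) := e2

end Stmt8Aux

set_option maxHeartbeats 1000000 in
open Stmt8Aux in
/-- Gaussian rounding of an SDP solution: there are universal constants `C₁, c > 0` such
that any vectors `v_i` with `‖v_i‖ ≤ 1`, `Σ v_i = 0` and objective `δ ≥ M/d` can be
rounded to scalars `z_i ∈ [-1,1]` with `|Σ z_i| ≤ C₁·N/d` and scalar objective at least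
`c·δ/log d`. -/
theorem stmt_8 : ∃ C₁ : ℝ, 0 < C₁ ∧ ∃ c : ℝ, 0 < c ∧
    ∀ d : ℕ, 2 ≤ d → ∀ (N M : ℕ) (Γ : Fin M → Finset (Fin N)),
    (∀ j, (Γ j).card = d) →
    ∀ (H : Type) [NormedAddCommGroup H] [InnerProductSpace ℝ H],
    FiniteDimensional ℝ H →
    ∀ v : Fin N → H, (∀ i, ‖v i‖ ≤ 1) → (∑ i, v i = 0) →
    (M : ℝ) / d ≤ ∑ j, ‖(1 / (d : ℝ)) • ∑ i ∈ Γ j, v i‖ ^ 2 →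
    ∃ z : Fin N → ℝ, (∀ i, z i ∈ Set.Icc (-1 : ℝ) 1) ∧
      |∑ i, z i| ≤ C₁ * N / d ∧
      c * (∑ j, ‖(1 / (d : ℝ)) • ∑ i ∈ Γ j, v i‖ ^ 2) / Real.log d ≤
        ∑ j, ((1 / (d : ℝ)) * ∑ i ∈ Γ j, z i) ^ 2 := by
  classical
  refine ⟨1, one_pos, 1/240, by norm_num, ?_⟩
  intro d hd N M Γ hΓ H _ _ hfin v hv hv0 hδ
  haveI := hfin
  by_cases hM0 : M = 0
  · subst hM0
    refine ⟨fun _ => 0, fun i => by norm_num, ?_, ?_⟩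
    · simp
      positivity
    · simp
  by_cases hN0 : N = 0
  · exfalso
    have j0 : Fin M := ⟨0, Nat.pos_of_ne_zero hM0⟩
    have h1 : (Γ j0).card ≤ Fintype.card (Fin N) := Finset.card_le_univ _
    rw [hΓ j0, Fintype.card_fin, hN0] at h1
    omega
  -- main case
  have hM1 : 1 ≤ M := Nat.pos_of_ne_zero hM0
  have hN1 : 1 ≤ N := Nat.pos_of_ne_zero hN0
  have hdR : (2:ℝ) ≤ (d:ℝ) := by exact_mod_cast hd
  have hdpos : (0:ℝ) < d := by linarith
  have hlogpos : (0:ℝ) < Real.log d := Real.log_pos (by linarith)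
  have hloglt : Real.log d < d := by
    have := Real.log_lt_sub_one_of_pos hdpos (by intro h; rw [h] at hdR; norm_num at hdR)
    linarith
  set w : Fin M → H := fun j => (1/(d:ℝ)) • ∑ i ∈ Γ j, v i with hw
  set D := ∑ j, ‖w j‖ ^ 2 with hD
  have hMdpos : (0:ℝ) < (M:ℝ)/d := div_pos (by exact_mod_cast hM1) hdpos
  have hDpos : (0:ℝ) < D := lt_of_lt_of_le hMdpos hδ
  have hMD : (M:ℝ) ≤ d * D := by
    rw [div_le_iff₀ hdpos] at hδ
    linarith
  set LL := 30 * Real.log d with hLLdef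
  have hLL2 : (2:ℝ) ≤ LL := by
    have h2 := Real.log_two_gt_d9
    have hl2 : Real.log 2 ≤ Real.log d := Real.log_le_log (by norm_num) hdR
    rw [hLLdef]; nlinarith
  have hLLpos : (0:ℝ) < LL := by linarith
  set τ := Real.sqrt LL with hτdef
  have hτpos : 0 < τ := Real.sqrt_pos.mpr hLLpos
  have hτ2 : τ ^ 2 = LL := Real.sq_sqrt hLLpos.le
  set dE := Real.exp (-(LL/2)) with hdEdef
  have hdEpos : 0 < dE := Real.exp_pos _
  have hdE : dE = ((d:ℝ)^15)⁻¹ := by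
    rw [hdEdef, Real.exp_neg]
    congr 1
    rw [hLLdef, show (30:ℝ) * Real.log (d:ℝ) / 2 = ((15:ℕ):ℝ) * Real.log (d:ℝ) by push_cast; ring,
      Real.exp_nat_mul, Real.exp_log hdpos]
  set k := Module.finrank ℝ H with hk
  let b : OrthonormalBasis (Fin k) ℝ H := stdOrthonormalBasis ℝ H
  set X : H → (Fin k → Bool) → ℝ := fun u ε => ∑ m, sg (ε m) * (inner ℝ u (b m) : ℝ) with hX
  -- Parseval
  have hPar : ∀ u : H, ∑ m, (inner ℝ u (b m) : ℝ)^2 = ‖u‖^2 := by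
    intro u
    calc ∑ m, (inner ℝ u (b m) : ℝ)^2
        = ∑ m, (inner ℝ u (b m) : ℝ) * (inner ℝ (b m) u : ℝ) := by
          refine Finset.sum_congr rfl fun m _ => ?_
          rw [real_inner_comm (b m) u, sq]
      _ = (inner ℝ u u : ℝ) := b.sum_inner_mul_inner u u
      _ = ‖u‖^2 := real_inner_self_eq_norm_sq u
  have hVar : ∀ u : H, ∑ ε : Fin k → Bool, (X u ε)^2 = (2:ℝ)^k * ‖u‖^2 := by
    intro u
    simp only [hX]
    rw [sum_sq_lin, hPar]
  have hMGF : ∀ u : H, ‖u‖ ≤ 1 → ∀ l : ℝ,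
      ∑ ε : Fin k → Bool, Real.exp (l * X u ε) ≤ (2:ℝ)^k * Real.exp (l^2/2) := by
    intro u hu l
    simp only [hX]
    calc ∑ ε : Fin k → Bool, Real.exp (l * ∑ m, sg (ε m) * (inner ℝ u (b m) : ℝ))
        ≤ (2:ℝ)^k * Real.exp (l^2 * (∑ m, (inner ℝ u (b m):ℝ)^2)/2) := sum_exp_lin _ l
      _ ≤ (2:ℝ)^k * Real.exp (l^2/2) := by
          refine mul_le_mul_of_nonneg_left (Real.exp_le_exp.mpr ?_) (by positivity)
          rw [hPar]
          have hu2 : ‖u‖^2 ≤ 1 := by nlinarith [norm_nonneg u]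
          nlinarith [sq_nonneg l]
  have hXsum0 : ∀ ε, ∑ i, X (v i) ε = 0 := by
    intro ε
    simp only [hX]
    rw [Finset.sum_comm]
    refine Finset.sum_eq_zero fun m _ => ?_
    rw [← Finset.mul_sum, ← sum_inner, hv0, inner_zero_left]
    simp
  have hXw : ∀ (j : Fin M) (ε : Fin k → Bool),
      X (w j) ε = (1/(d:ℝ)) * ∑ i ∈ Γ j, X (v i) ε := by
    intro j ε
    have h1 : ∀ m : Fin k, (inner ℝ (w j) (b m) : ℝ)
        = (1/(d:ℝ)) * ∑ i ∈ Γ j, (inner ℝ (v i) (b m) : ℝ) := by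
      intro m
      rw [show w j = (1/(d:ℝ)) • ∑ i ∈ Γ j, v i from rfl, real_inner_smul_left, sum_inner]
    simp only [hX, h1, Finset.mul_sum]
    rw [Finset.sum_comm]
    exact Finset.sum_congr rfl fun i _ => Finset.sum_congr rfl fun m _ => by ring
  set Z : (Fin k → Bool) → Fin N → ℝ := fun ε i => clamp (X (v i) ε / τ) with hZ
  set er : (Fin k → Bool) → Fin N → ℝ := fun ε i => Z ε i - X (v i) ε / τ with her
  set A : (Fin k → Bool) → ℝ := fun ε => ∑ j, ((1/(d:ℝ)) * ∑ i ∈ Γ j, Z ε i)^2 with hA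
  set B : (Fin k → Bool) → ℝ := fun ε => ∑ i, |er ε i| with hB
  -- per-coordinate moment bounds
  have hExp : ∀ i : Fin N,
      ∑ ε : Fin k → Bool, Real.exp (LL * (|X (v i) ε / τ| - 1)) ≤ (2:ℝ)^k * (2*dE) := by
    intro i
    have hpt : ∀ ε : Fin k → Bool, Real.exp (LL * (|X (v i) ε / τ| - 1))
        ≤ Real.exp (-LL) * (Real.exp ((LL/τ) * X (v i) ε) + Real.exp ((-(LL/τ)) * X (v i) ε)) := by
      intro ε
      have habs : LL * (|X (v i) ε / τ| - 1) = -LL + |(LL/τ) * X (v i) ε| := by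
        rw [abs_mul, abs_of_pos (div_pos hLLpos hτpos), abs_div, abs_of_pos hτpos]
        field_simp
        ring
      have h2 : Real.exp (|(LL/τ) * X (v i) ε|)
          ≤ Real.exp ((LL/τ) * X (v i) ε) + Real.exp ((-(LL/τ)) * X (v i) ε) := by
        rcases abs_cases ((LL/τ) * X (v i) ε) with ⟨he,_⟩ | ⟨he,_⟩ <;> rw [he]
        · have := Real.exp_pos ((-(LL/τ)) * X (v i) ε)
          linarith
        · have := Real.exp_pos ((LL/τ) * X (v i) ε)
          rw [show -((LL/τ) * X (v i) ε) = (-(LL/τ)) * X (v i) ε by ring]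
          linarith
      rw [habs, Real.exp_add]
      exact mul_le_mul_of_nonneg_left h2 (Real.exp_pos _).le
    have hm1 := hMGF (v i) (hv i) (LL/τ)
    have hm2 := hMGF (v i) (hv i) (-(LL/τ))
    have hLτ : (LL/τ)^2 = LL := by
      rw [div_pow, hτ2]
      field_simp
    have hnLτ : (-(LL/τ))^2 = LL := by rw [neg_pow]; simp [hLτ]
    calc ∑ ε : Fin k → Bool, Real.exp (LL * (|X (v i) ε / τ| - 1))
        ≤ ∑ ε : Fin k → Bool, Real.exp (-LL) *
            (Real.exp ((LL/τ) * X (v i) ε) + Real.exp ((-(LL/τ)) * X (v i) ε)) :=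
          Finset.sum_le_sum fun ε _ => hpt ε
      _ = Real.exp (-LL) * ((∑ ε : Fin k → Bool, Real.exp ((LL/τ) * X (v i) ε))
            + ∑ ε : Fin k → Bool, Real.exp ((-(LL/τ)) * X (v i) ε)) := by
          rw [← Finset.mul_sum, Finset.sum_add_distrib]
      _ ≤ Real.exp (-LL) * ((2:ℝ)^k * Real.exp ((LL/τ)^2/2) + (2:ℝ)^k * Real.exp ((-(LL/τ))^2/2)) := by
          refine mul_le_mul_of_nonneg_left (add_le_add hm1 hm2) (Real.exp_pos _).le
      _ = (2:ℝ)^k * (2*dE) := by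
          rw [hLτ, hnLτ]
          have h5 : Real.exp (-LL) * Real.exp (LL/2) = dE := by
            rw [hdEdef, ← Real.exp_add]
            congr 1
            ring
          calc Real.exp (-LL) * ((2:ℝ)^k * Real.exp (LL/2) + (2:ℝ)^k * Real.exp (LL/2))
              = (2:ℝ)^k * (2 * (Real.exp (-LL) * Real.exp (LL/2))) := by ring
            _ = (2:ℝ)^k * (2*dE) := by rw [h5]
  have hE1 : ∀ i, ∑ ε : Fin k → Bool, |er ε i| ≤ (2:ℝ)^k * (2*dE) := by
    intro i
    refine le_trans (Finset.sum_le_sum fun ε _ => ?_) (hExp i)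
    exact (clamp_err hLL2).1
  have hE2 : ∀ i, ∑ ε : Fin k → Bool, (er ε i)^2 ≤ (2:ℝ)^k * (2*dE) := by
    intro i
    refine le_trans (Finset.sum_le_sum fun ε _ => ?_) (hExp i)
    exact (clamp_err hLL2).2
  have hZmem : ∀ ε i, Z ε i ∈ Set.Icc (-1:ℝ) 1 := fun ε i => clamp_mem _
  have hAleM : ∀ ε, A ε ≤ M := by
    intro ε
    calc A ε ≤ ∑ _j : Fin M, (1:ℝ) := by
          refine Finset.sum_le_sum fun j _ => ?_
          have h6 : |∑ i ∈ Γ j, Z ε i| ≤ d := by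
            calc |∑ i ∈ Γ j, Z ε i| ≤ ∑ i ∈ Γ j, |Z ε i| := Finset.abs_sum_le_sum_abs _ _
              _ ≤ ∑ _i ∈ Γ j, (1:ℝ) := Finset.sum_le_sum fun i _ =>
                  abs_le.mpr ⟨(hZmem ε i).1, (hZmem ε i).2⟩
              _ = d := by rw [Finset.sum_const, hΓ j]; simp
          have h7 : |(1/(d:ℝ)) * ∑ i ∈ Γ j, Z ε i| ≤ 1 := by
            rw [abs_mul, abs_of_pos (by positivity : (0:ℝ) < 1/(d:ℝ))]
            calc (1/(d:ℝ)) * |∑ i ∈ Γ j, Z ε i| ≤ (1/(d:ℝ)) * d :=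
                mul_le_mul_of_nonneg_left h6 (by positivity)
              _ = 1 := by field_simp
          calc ((1/(d:ℝ)) * ∑ i ∈ Γ j, Z ε i)^2 = |(1/(d:ℝ)) * ∑ i ∈ Γ j, Z ε i|^2 :=
              (sq_abs _).symm
            _ ≤ 1^2 := pow_le_pow_left₀ (abs_nonneg _) h7 2
            _ = 1 := one_pow 2
      _ = M := by simp
  have hBnn : ∀ ε, 0 ≤ B ε := fun ε => Finset.sum_nonneg fun i _ => abs_nonneg _
  have hBsum : ∑ ε : Fin k → Bool, B ε ≤ (2:ℝ)^k * ((N:ℝ) * (2*dE)) := by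
    simp only [hB]
    rw [Finset.sum_comm]
    calc ∑ i, ∑ ε : Fin k → Bool, |er ε i| ≤ ∑ _i : Fin N, (2:ℝ)^k * (2*dE) :=
        Finset.sum_le_sum fun i _ => hE1 i
      _ = (2:ℝ)^k * ((N:ℝ) * (2*dE)) := by
          rw [Finset.sum_const]
          simp [nsmul_eq_mul]
          ring
  have hsplit : ∀ (j : Fin M) (ε : Fin k → Bool),
      (1/(d:ℝ)) * ∑ i ∈ Γ j, Z ε i = X (w j) ε / τ + (1/(d:ℝ)) * ∑ i ∈ Γ j, er ε i := by
    intro j ε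
    have hZe : ∑ i ∈ Γ j, Z ε i = ∑ i ∈ Γ j, (X (v i) ε / τ + er ε i) := by
      refine Finset.sum_congr rfl fun i _ => ?_
      simp only [her]
      ring
    rw [hZe, Finset.sum_add_distrib, mul_add]
    congr 1
    rw [hXw j ε, ← Finset.sum_div]
    ring
  have hptA : ∀ (ε : Fin k → Bool) (j : Fin M),
      (X (w j) ε / τ)^2/2 - (1/(d:ℝ)) * ∑ i ∈ Γ j, (er ε i)^2
        ≤ ((1/(d:ℝ)) * ∑ i ∈ Γ j, Z ε i)^2 := by
    intro ε j
    rw [hsplit j ε]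
    have hcs : (∑ i ∈ Γ j, er ε i)^2 ≤ (d:ℝ) * ∑ i ∈ Γ j, (er ε i)^2 := by
      have h := sq_sum_le_card_mul_sum_sq (s := Γ j) (f := er ε)
      rw [hΓ j] at h
      exact_mod_cast h
    have hF2 : ((1/(d:ℝ)) * ∑ i ∈ Γ j, er ε i)^2 ≤ (1/(d:ℝ)) * ∑ i ∈ Γ j, (er ε i)^2 := by
      calc ((1/(d:ℝ)) * ∑ i ∈ Γ j, er ε i)^2
          = (1/(d:ℝ))^2 * (∑ i ∈ Γ j, er ε i)^2 := by ring
        _ ≤ (1/(d:ℝ))^2 * ((d:ℝ) * ∑ i ∈ Γ j, (er ε i)^2) :=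
            mul_le_mul_of_nonneg_left hcs (by positivity)
        _ = (1/(d:ℝ)) * ∑ i ∈ Γ j, (er ε i)^2 := by
            field_simp
    have key : ∀ Y F Q : ℝ, F^2 ≤ Q → Y^2/2 - Q ≤ (Y+F)^2 := by
      intro Y F Q h
      nlinarith [sq_nonneg (Y + 2*F)]
    exact key _ _ _ hF2
  have hAsumLow : (2:ℝ)^k * (D/(2*LL) - (M:ℝ) * (2*dE)) ≤ ∑ ε : Fin k → Bool, A ε := by
    have step1 : ∑ ε : Fin k → Bool,
        ∑ j, ((X (w j) ε / τ)^2/2 - (1/(d:ℝ)) * ∑ i ∈ Γ j, (er ε i)^2)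
          ≤ ∑ ε : Fin k → Bool, A ε := by
      refine Finset.sum_le_sum fun ε _ => ?_
      exact Finset.sum_le_sum fun j _ => hptA ε j
    refine le_trans ?_ step1
    rw [Finset.sum_comm]
    have step2 : ∀ j : Fin M, (2:ℝ)^k * (‖w j‖^2/(2*LL) - 2*dE)
        ≤ ∑ ε : Fin k → Bool, ((X (w j) ε / τ)^2/2 - (1/(d:ℝ)) * ∑ i ∈ Γ j, (er ε i)^2) := by
      intro j
      rw [Finset.sum_sub_distrib]
      have e1 : ∑ ε : Fin k → Bool, (X (w j) ε / τ)^2/2 = (2:ℝ)^k * ‖w j‖^2 / (2*LL) := by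
        have hterm : ∀ ε : Fin k → Bool, (X (w j) ε / τ)^2/2 = (X (w j) ε)^2 / (2*LL) := by
          intro ε
          rw [div_pow, hτ2]
          ring
        rw [Finset.sum_congr rfl fun ε _ => hterm ε, ← Finset.sum_div, hVar]
      have e2 : ∑ ε : Fin k → Bool, (1/(d:ℝ)) * ∑ i ∈ Γ j, (er ε i)^2 ≤ (2:ℝ)^k * (2*dE) := by
        rw [← Finset.mul_sum, Finset.sum_comm]
        calc (1/(d:ℝ)) * ∑ i ∈ Γ j, ∑ ε : Fin k → Bool, (er ε i)^2
            ≤ (1/(d:ℝ)) * ∑ _i ∈ Γ j, (2:ℝ)^k * (2*dE) :=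
              mul_le_mul_of_nonneg_left (Finset.sum_le_sum fun i _ => hE2 i) (by positivity)
          _ = (2:ℝ)^k * (2*dE) := by
              rw [Finset.sum_const, hΓ j, nsmul_eq_mul]
              field_simp
      calc (2:ℝ)^k * (‖w j‖^2/(2*LL) - 2*dE)
          = (2:ℝ)^k * ‖w j‖^2/(2*LL) - (2:ℝ)^k * (2*dE) := by ring
        _ ≤ _ := sub_le_sub (le_of_eq e1.symm) e2
    calc (2:ℝ)^k * (D/(2*LL) - (M:ℝ)*(2*dE))
        = ∑ j : Fin M, (2:ℝ)^k * (‖w j‖^2/(2*LL) - 2*dE) := by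
          rw [hD]
          rw [show ∑ j : Fin M, (2:ℝ)^k * (‖w j‖^2/(2*LL) - 2*dE)
              = (∑ j : Fin M, (2:ℝ)^k/(2*LL) * ‖w j‖^2) - ∑ _j : Fin M, (2:ℝ)^k * (2*dE) by
            rw [← Finset.sum_sub_distrib]
            exact Finset.sum_congr rfl fun j _ => by ring]
          rw [← Finset.mul_sum, Finset.sum_const, Finset.card_univ, Fintype.card_fin,
            nsmul_eq_mul]
          ring
      _ ≤ _ := Finset.sum_le_sum fun j _ => step2 j
  -- numerics
  have h13 : (240:ℝ) ≤ (d:ℝ)^13 := by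
    calc (240:ℝ) ≤ 2^13 := by norm_num
      _ ≤ (d:ℝ)^13 := pow_le_pow_left₀ (by norm_num) hdR 13
  have h12 : (480:ℝ) ≤ (d:ℝ)^12 := by
    calc (480:ℝ) ≤ 2^12 := by norm_num
      _ ≤ (d:ℝ)^12 := pow_le_pow_left₀ (by norm_num) hdR 12
  set aa := D/(240 * Real.log d) with haa
  have haapos : 0 < aa := div_pos hDpos (by positivity)
  have hN1' : (M:ℝ)*(2*dE) ≤ D/(120*Real.log d) := by
    rw [hdE]
    rw [show (M:ℝ) * (2 * ((d:ℝ)^15)⁻¹) = (2*(M:ℝ))/(d:ℝ)^15 by ring]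
    rw [div_le_div_iff₀ (by positivity) (by positivity)]
    calc 2*(M:ℝ)*(120*Real.log d) = 240 * ((M:ℝ) * Real.log d) := by ring
      _ ≤ 240 * (((d:ℝ)*D) * Real.log d) := by nlinarith
      _ ≤ 240 * (((d:ℝ)*D) * (d:ℝ)) := by nlinarith
      _ = 240 * ((d:ℝ)^2 * D) := by ring
      _ ≤ (d:ℝ)^13 * ((d:ℝ)^2 * D) := mul_le_mul_of_nonneg_right h13 (by positivity)
      _ = D * (d:ℝ)^15 := by ring
  have hEA2a : (2:ℝ)^k * (2*aa) ≤ ∑ ε : Fin k → Bool, A ε := by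
    refine le_trans ?_ hAsumLow
    refine mul_le_mul_of_nonneg_left ?_ (by positivity)
    have hhalf : D/(2*LL) = D/(60 * Real.log d) := by
      rw [hLLdef]
      ring_nf
    have h2aa : (2:ℝ)*aa = D/(120*Real.log d) := by
      rw [haa]
      field_simp
      ring
    have hsub : D/(60*Real.log d) - D/(120*Real.log d) = D/(120*Real.log d) := by
      field_simp
      ring
    rw [hhalf, h2aa]
    linarith
  set S := Finset.univ.filter (fun ε : Fin k → Bool => aa ≤ A ε) with hS
  set T := Finset.univ.filter (fun ε : Fin k → Bool => (N:ℝ)/d < B ε) with hT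
  have hcardΩ : ((Finset.univ : Finset (Fin k → Bool)).card : ℝ) = 2^k := by
    rw [Finset.card_univ, Fintype.card_fun]
    simp
  have hScard : (2:ℝ)^k * aa ≤ (S.card : ℝ) * M := by
    have hsplitsum := Finset.sum_filter_add_sum_filter_not Finset.univ
      (fun ε : Fin k → Bool => aa ≤ A ε) A
    have hb1 : ∑ ε ∈ S, A ε ≤ (S.card : ℝ) * M := by
      calc ∑ ε ∈ S, A ε ≤ ∑ _ε ∈ S, (M:ℝ) := Finset.sum_le_sum fun ε _ => hAleM ε
        _ = (S.card : ℝ) * M := by rw [Finset.sum_const, nsmul_eq_mul]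
    have hb2 : ∑ ε ∈ Finset.univ.filter (fun ε : Fin k → Bool => ¬ aa ≤ A ε), A ε
        ≤ (2:ℝ)^k * aa := by
      calc ∑ ε ∈ Finset.univ.filter (fun ε : Fin k → Bool => ¬ aa ≤ A ε), A ε
          ≤ ∑ _ε ∈ Finset.univ.filter (fun ε : Fin k → Bool => ¬ aa ≤ A ε), aa :=
            Finset.sum_le_sum fun ε hε => le_of_lt (not_le.mp (Finset.mem_filter.mp hε).2)
        _ = ((Finset.univ.filter (fun ε : Fin k → Bool => ¬ aa ≤ A ε)).card : ℝ) * aa := by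
            rw [Finset.sum_const, nsmul_eq_mul]
        _ ≤ (2:ℝ)^k * aa := by
            refine mul_le_mul_of_nonneg_right ?_ haapos.le
            rw [← hcardΩ]
            exact_mod_cast Finset.card_filter_le _ _
    have heq : (2:ℝ)^k * (2*aa) = 2*((2:ℝ)^k*aa) := by ring
    rw [← hS] at hsplitsum
    linarith [hEA2a, hsplitsum, hb1, hb2]
  have hTcard : (T.card : ℝ) ≤ (2:ℝ)^k * (2*dE) * d := by
    have hNpos : (0:ℝ) < N := by exact_mod_cast hN1
    have h1 : (T.card:ℝ) * ((N:ℝ)/d) ≤ ∑ ε ∈ T, B ε := by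
      calc (T.card:ℝ) * ((N:ℝ)/d) = ∑ _ε ∈ T, (N:ℝ)/d := by rw [Finset.sum_const, nsmul_eq_mul]
        _ ≤ ∑ ε ∈ T, B ε :=
          Finset.sum_le_sum fun ε hε => le_of_lt (Finset.mem_filter.mp hε).2
    have h2 : ∑ ε ∈ T, B ε ≤ ∑ ε : Fin k → Bool, B ε :=
      Finset.sum_le_sum_of_subset_of_nonneg (Finset.filter_subset _ _) (fun ε _ _ => hBnn ε)
    have h3 : (T.card : ℝ) * ((N:ℝ)/d) ≤ (2:ℝ)^k * ((N:ℝ)*(2*dE)) :=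
      le_trans h1 (le_trans h2 hBsum)
    have h4 := mul_le_mul_of_nonneg_right h3 (by positivity : (0:ℝ) ≤ (d:ℝ)/(N:ℝ))
    have h5 : (T.card:ℝ) * ((N:ℝ)/d) * ((d:ℝ)/(N:ℝ)) = T.card := by field_simp
    have h6 : (2:ℝ)^k * ((N:ℝ)*(2*dE)) * ((d:ℝ)/(N:ℝ)) = (2:ℝ)^k*(2*dE)*d := by
      field_simp
    rw [h5, h6] at h4
    exact h4
  have hN2 : (2:ℝ)^k * (2*dE) * d * M < (2:ℝ)^k * aa := by
    have key : (2*((d:ℝ)^15)⁻¹) * d * M < D/(240*Real.log d) := by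
      rw [show (2*((d:ℝ)^15)⁻¹) * d * (M:ℝ) = (2*(d:ℝ)*(M:ℝ))/(d:ℝ)^15 by
        field_simp]
      rw [div_lt_div_iff₀ (by positivity) (by positivity)]
      calc 2*(d:ℝ)*(M:ℝ)*(240*Real.log d) = 480 * ((d:ℝ)*(M:ℝ)) * Real.log d := by ring
        _ ≤ 480 * ((d:ℝ)*((d:ℝ)*D)) * Real.log d := by
            have hMD' : (d:ℝ)*(M:ℝ) ≤ (d:ℝ)*((d:ℝ)*D) :=
              mul_le_mul_of_nonneg_left hMD (by positivity)
            calc 480 * ((d:ℝ)*(M:ℝ)) * Real.log d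
                = ((d:ℝ)*(M:ℝ)) * (480 * Real.log d) := by ring
              _ ≤ ((d:ℝ)*((d:ℝ)*D)) * (480 * Real.log d) :=
                  mul_le_mul_of_nonneg_right hMD' (by positivity)
              _ = 480 * ((d:ℝ)*((d:ℝ)*D)) * Real.log d := by ring
        _ < 480 * ((d:ℝ)*((d:ℝ)*D)) * d := by
            refine mul_lt_mul_of_pos_left hloglt ?_
            positivity
        _ = 480 * ((d:ℝ)^3 * D) := by ring
        _ ≤ (d:ℝ)^12 * ((d:ℝ)^3 * D) := mul_le_mul_of_nonneg_right h12 (by positivity)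
        _ = D * (d:ℝ)^15 := by ring
    have h7 := mul_lt_mul_of_pos_left key (by positivity : (0:ℝ) < (2:ℝ)^k)
    calc (2:ℝ)^k * (2*dE) * d * M = (2:ℝ)^k * ((2*((d:ℝ)^15)⁻¹) * d * M) := by
          rw [hdE]; ring
      _ < (2:ℝ)^k * (D/(240*Real.log d)) := h7
      _ = (2:ℝ)^k * aa := by rw [haa]
  have hST : T.card < S.card := by
    by_contra hc
    push_neg at hc
    have hMpos : (0:ℝ) < M := by exact_mod_cast hM1
    have hcR : (S.card : ℝ) ≤ T.card := by exact_mod_cast hc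
    have h1 : (S.card:ℝ)*M ≤ (T.card:ℝ)*M := mul_le_mul_of_nonneg_right hcR hMpos.le
    have h2 : (T.card:ℝ)*M ≤ (2:ℝ)^k*(2*dE)*d*M := mul_le_mul_of_nonneg_right hTcard hMpos.le
    linarith [hScard, hN2]
  have hnotsub : ¬ (S ⊆ T) := fun hsub => absurd (Finset.card_le_card hsub) (not_le.mpr hST)
  obtain ⟨ε₀, hε₀S, hε₀T⟩ := Finset.not_subset.mp hnotsub
  have hε₀A : aa ≤ A ε₀ := (Finset.mem_filter.mp hε₀S).2
  have hε₀B : B ε₀ ≤ (N:ℝ)/d := by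
    by_contra hc
    push_neg at hc
    exact hε₀T (Finset.mem_filter.mpr ⟨Finset.mem_univ _, hc⟩)
  refine ⟨Z ε₀, fun i => hZmem ε₀ i, ?_, ?_⟩
  · have hzsum : ∑ i, Z ε₀ i = ∑ i, er ε₀ i := by
      have hterm : ∀ i : Fin N, Z ε₀ i = X (v i) ε₀ / τ + er ε₀ i := fun i => by
        simp only [her]; ring
      rw [Finset.sum_congr rfl fun i _ => hterm i, Finset.sum_add_distrib, ← Finset.sum_div,
        hXsum0]
      simp
    rw [hzsum]
    calc |∑ i, er ε₀ i| ≤ ∑ i, |er ε₀ i| := Finset.abs_sum_le_sum_abs _ _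
      _ ≤ (N:ℝ)/d := hε₀B
      _ = 1 * (N:ℝ) / d := by ring
  · calc 1/240 * D / Real.log d = aa := by rw [haa]; ring
      _ ≤ A ε₀ := hε₀A
      _ = ∑ j, ((1/(d:ℝ)) * ∑ i ∈ Γ j, Z ε₀ i)^2 := rfl
end

section
/- Let ρ ∈ (0,1), let d ≥ 4 be an integer, set δ = (1−ρ)·√(2/d), and let y ∈ [−1,1]. Then (1/2)·[ (1−ρ+δ)^{(1+y)d/2}·(1−ρ−δ)^{(1−y)d/2} + (1−ρ−δ)^{(1+y)d/2}·(1−ρ+δ)^{(1−y)d/2} ] ≥ e^{−2}·(1−ρ)^d·d·y², where the exponents are real powers (note 0 < 1−ρ−δ < 1−ρ+δ < 1 for d ≥ 4). -/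
set_option maxHeartbeats 1000000

/-- `cosh θ ≥ θ²/2`. -/
lemma aux_cosh_lb (θ : ℝ) : θ ^ 2 / 2 ≤ Real.cosh θ := by
  have hsq : ∀ t : ℝ, t ^ 2 ≤ Real.sinh t ^ 2 := by
    intro t
    rcases le_or_gt 0 t with h | h
    · have h1 : t ≤ Real.sinh t := Real.self_le_sinh_iff.2 h
      have h2 : 0 ≤ Real.sinh t := le_trans h h1
      nlinarith
    · have h0 : 0 ≤ -t := by linarith
      have h1 : -t ≤ Real.sinh (-t) := Real.self_le_sinh_iff.2 h0
      rw [Real.sinh_neg] at h1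
      have h2 : Real.sinh t ≤ 0 := by linarith
      nlinarith
  have hid : Real.cosh θ = Real.cosh (θ / 2) ^ 2 + Real.sinh (θ / 2) ^ 2 := by
    rw [← Real.cosh_two_mul]; ring_nf
  have h1 := hsq (θ / 2)
  have h2 : Real.sinh (θ / 2) ^ 2 ≤ Real.cosh (θ / 2) ^ 2 := by
    have := Real.cosh_sq (θ / 2); nlinarith
  nlinarith

/-- `log((1+c)/(1-c)) ≥ 2c` for `0 ≤ c < 1`. -/
lemma aux_log_lb {c : ℝ} (h0 : 0 ≤ c) (h1 : c < 1) :
    2 * c ≤ Real.log (1 + c) - Real.log (1 - c) := by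
  set f : ℝ → ℝ := fun t => Real.log (1 + t) - Real.log (1 - t) - 2 * t with hf
  have hder : ∀ t ∈ Set.Icc (0 : ℝ) c,
      HasDerivAt f (1 / (1 + t) + 1 / (1 - t) - 2) t := by
    intro t ht
    obtain ⟨ht0, htc⟩ := ht
    have ha : (1 : ℝ) + t ≠ 0 := by nlinarith
    have hb : (1 : ℝ) - t ≠ 0 := by nlinarith
    have d1 : HasDerivAt (fun t : ℝ => Real.log (1 + t)) (1 / (1 + t)) t := by
      have := ((hasDerivAt_id t).const_add (1 : ℝ)).log ha
      simpa using this
    have d2 : HasDerivAt (fun t : ℝ => Real.log (1 - t)) ((-1) / (1 - t)) t := by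
      have := ((hasDerivAt_id t).const_sub (1 : ℝ)).log hb
      simpa using this
    have d3 : HasDerivAt (fun t : ℝ => 2 * t) 2 t := by
      simpa using (hasDerivAt_id t).const_mul (2 : ℝ)
    have := (d1.sub d2).sub d3
    exact this.congr_deriv (by ring)
  have hmono : MonotoneOn f (Set.Icc (0 : ℝ) c) := by
    apply monotoneOn_of_deriv_nonneg (convex_Icc 0 c)
    · intro t ht
      exact (hder t ht).continuousAt.continuousWithinAt
    · intro t ht
      rw [interior_Icc] at ht
      exact ((hder t ⟨le_of_lt ht.1, le_of_lt ht.2⟩).differentiableAt).differentiableWithinAt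
    · intro t ht
      rw [interior_Icc] at ht
      obtain ⟨ht0, htc⟩ := ht
      rw [(hder t ⟨le_of_lt ht0, le_of_lt htc⟩).deriv]
      have hap : (0 : ℝ) < 1 + t := by linarith
      have hbp : (0 : ℝ) < 1 - t := by linarith
      have key : 1 / (1 + t) + 1 / (1 - t) = 2 / ((1 + t) * (1 - t)) := by
        field_simp; ring
      rw [key]
      have hprod : 0 < (1 + t) * (1 - t) := by positivity
      have hprod1 : (1 + t) * (1 - t) ≤ 1 := by nlinarith
      have : (2 : ℝ) ≤ 2 / ((1 + t) * (1 - t)) := by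
        rw [le_div_iff₀ hprod]; nlinarith
      linarith
  have hmem0 : (0 : ℝ) ∈ Set.Icc (0 : ℝ) c := ⟨le_refl 0, h0⟩
  have hmemc : c ∈ Set.Icc (0 : ℝ) c := ⟨h0, le_refl c⟩
  have := hmono hmem0 hmemc h0
  simp only [hf] at this
  simp only [add_zero, sub_zero, Real.log_one, mul_zero] at this
  linarith

/-- Key estimate for rounding biases to bits: with `δ = (1-ρ)√(2/d)` and `y ∈ [-1,1]`,
`(1/2)·[(1-ρ+δ)^{(1+y)d/2}(1-ρ-δ)^{(1-y)d/2} + (1-ρ-δ)^{(1+y)d/2}(1-ρ+δ)^{(1-y)d/2}]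
  ≥ e^{-2}·(1-ρ)^d·d·y²`. -/
theorem stmt_11 (ρ : ℝ) (hρ0 : 0 < ρ) (hρ1 : ρ < 1) (d : ℕ) (hd : 4 ≤ d)
    (δ : ℝ) (hδ : δ = (1 - ρ) * Real.sqrt (2 / (d : ℝ)))
    (y : ℝ) (hy : y ∈ Set.Icc (-1 : ℝ) 1) :
    Real.exp (-2) * (1 - ρ) ^ d * d * y ^ 2 ≤
      (1 / 2) * ((1 - ρ + δ) ^ ((1 + y) * (d : ℝ) / 2) *
            (1 - ρ - δ) ^ ((1 - y) * (d : ℝ) / 2)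
          + (1 - ρ - δ) ^ ((1 + y) * (d : ℝ) / 2) *
            (1 - ρ + δ) ^ ((1 - y) * (d : ℝ) / 2)) := by
  have hd4 : (4 : ℝ) ≤ (d : ℝ) := by exact_mod_cast hd
  have hd0 : (0 : ℝ) < (d : ℝ) := by linarith
  set u : ℝ := Real.sqrt (2 / (d : ℝ)) with hu
  have hu2 : u ^ 2 = 2 / (d : ℝ) := Real.sq_sqrt (by positivity)
  have hu0 : 0 < u := Real.sqrt_pos.2 (by positivity)
  have hu2le : u ^ 2 ≤ 1 / 2 := by
    rw [hu2]; rw [div_le_div_iff₀ hd0 (by norm_num)]; linarith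
  have hu1 : u < 1 := by nlinarith
  have hρ' : (0 : ℝ) < 1 - ρ := by linarith
  have ha : 1 - ρ + δ = (1 - ρ) * (1 + u) := by rw [hδ]; ring
  have hb : 1 - ρ - δ = (1 - ρ) * (1 - u) := by rw [hδ]; ring
  have hap : 0 < 1 - ρ + δ := by rw [ha]; positivity
  have hbp : 0 < 1 - ρ - δ := by
    rw [hb]; apply mul_pos hρ'; linarith
  set La : ℝ := Real.log (1 - ρ + δ) with hLa
  set Lb : ℝ := Real.log (1 - ρ - δ) with hLb
  set p : ℝ := (1 + y) * (d : ℝ) / 2 with hp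
  set q : ℝ := (1 - y) * (d : ℝ) / 2 with hq
  set S : ℝ := ((d : ℝ) / 2) * (La + Lb) with hS
  set θ : ℝ := (y * (d : ℝ) / 2) * (La - Lb) with hθ
  -- rewrite the RHS as exp S * (exp θ + exp (-θ)) / ... = exp S * cosh θ
  have hterm1 : (1 - ρ + δ) ^ p * (1 - ρ - δ) ^ q = Real.exp (S + θ) := by
    rw [Real.rpow_def_of_pos hap, Real.rpow_def_of_pos hbp, ← Real.exp_add]
    congr 1
    rw [hS, hθ, hp, hq, hLa, hLb]; ring
  have hterm2 : (1 - ρ - δ) ^ p * (1 - ρ + δ) ^ q = Real.exp (S - θ) := by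
    rw [Real.rpow_def_of_pos hap, Real.rpow_def_of_pos hbp, ← Real.exp_add]
    congr 1
    rw [hS, hθ, hp, hq, hLa, hLb]; ring
  have hRHS : (1 / 2) * ((1 - ρ + δ) ^ p * (1 - ρ - δ) ^ q
      + (1 - ρ - δ) ^ p * (1 - ρ + δ) ^ q) = Real.exp S * Real.cosh θ := by
    rw [hterm1, hterm2, Real.exp_add, Real.exp_sub, Real.cosh_eq]
    rw [Real.exp_neg]
    field_simp
  rw [hRHS]
  -- Bound 1 : exp S ≥ exp (-2) * (1-ρ)^d
  have hlogab : La + Lb = 2 * Real.log (1 - ρ) + Real.log (1 - u ^ 2) := by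
    rw [hLa, hLb, ha, hb, Real.log_mul (ne_of_gt hρ') (by positivity),
      Real.log_mul (ne_of_gt hρ') (by nlinarith)]
    have : (1 : ℝ) - u ^ 2 = (1 + u) * (1 - u) := by ring
    rw [this, Real.log_mul (by positivity) (by nlinarith)]
    ring
  have hlog1 : -(4 / (d : ℝ)) ≤ Real.log (1 - u ^ 2) := by
    rw [hu2]
    rw [Real.le_log_iff_exp_le (by rw [← hu2]; nlinarith)]
    have h1 : (1 : ℝ) + 4 / (d : ℝ) ≤ Real.exp (4 / (d : ℝ)) := by
      have := Real.add_one_le_exp (4 / (d : ℝ)); linarith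
    have h2 : Real.exp (-(4 / (d : ℝ))) = (Real.exp (4 / (d : ℝ)))⁻¹ := Real.exp_neg _
    rw [h2]
    have h3 : (Real.exp (4 / (d : ℝ)))⁻¹ ≤ (1 + 4 / (d : ℝ))⁻¹ := by
      apply inv_anti₀ (by positivity) h1
    apply le_trans h3
    rw [inv_le_iff_one_le_mul₀ (by positivity)]
    have h2d : 4 / (d : ℝ) = 2 * (2 / (d : ℝ)) := by ring
    have ht0 : (0 : ℝ) < 2 / (d : ℝ) := by positivity
    have ht2 : 2 / (d : ℝ) ≤ 1 / 2 := by
      rw [div_le_div_iff₀ hd0 (by norm_num)]; linarith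
    rw [h2d]
    nlinarith [sq_nonneg (2 / (d : ℝ))]
  have hexpS : Real.exp (-2) * (1 - ρ) ^ d ≤ Real.exp S := by
    have hSval : S = (d : ℝ) * Real.log (1 - ρ) + ((d : ℝ) / 2) * Real.log (1 - u ^ 2) := by
      rw [hS, hlogab]; ring
    rw [hSval, Real.exp_add]
    have e1 : Real.exp ((d : ℝ) * Real.log (1 - ρ)) = (1 - ρ) ^ d := by
      rw [mul_comm, Real.exp_mul, Real.exp_log hρ', ← Real.rpow_natCast]
    rw [e1, mul_comm ((1 - ρ) ^ d) (Real.exp ((d : ℝ) / 2 * Real.log (1 - u ^ 2)))]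
    apply mul_le_mul_of_nonneg_right _ (le_of_lt (pow_pos hρ' d))
    apply Real.exp_le_exp.2
    have : -2 ≤ ((d : ℝ) / 2) * (-(4 / (d : ℝ))) := by
      rw [mul_neg]
      have : (d : ℝ) / 2 * (4 / (d : ℝ)) = 2 := by field_simp; ring
      rw [this]
    apply le_trans this
    apply mul_le_mul_of_nonneg_left hlog1 (by positivity)
  -- Bound 2 : cosh θ ≥ d * y^2
  have hL : 2 * u ≤ La - Lb := by
    have := aux_log_lb (le_of_lt hu0) hu1
    have e1 : La = Real.log (1 - ρ) + Real.log (1 + u) := by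
      rw [hLa, ha, Real.log_mul (ne_of_gt hρ') (by positivity)]
    have e2 : Lb = Real.log (1 - ρ) + Real.log (1 - u) := by
      rw [hLb, hb, Real.log_mul (ne_of_gt hρ') (by nlinarith)]
    rw [e1, e2]; linarith
  have hcosh : (d : ℝ) * y ^ 2 ≤ Real.cosh θ := by
    have h1 := aux_cosh_lb θ
    have hLpos : 0 ≤ La - Lb := by nlinarith
    have hθ2 : θ ^ 2 = y ^ 2 * (d : ℝ) ^ 2 / 4 * (La - Lb) ^ 2 := by rw [hθ]; ring
    have hL2 : 8 / (d : ℝ) ≤ (La - Lb) ^ 2 := by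
      have h4u2 : (2 * u) ^ 2 ≤ (La - Lb) ^ 2 := by nlinarith
      have : (2 * u) ^ 2 = 8 / (d : ℝ) := by
        have : (2 * u) ^ 2 = 4 * u ^ 2 := by ring
        rw [this, hu2]; ring
      linarith
    have : (d : ℝ) * y ^ 2 ≤ θ ^ 2 / 2 := by
      rw [hθ2]
      have hy2 : 0 ≤ y ^ 2 := sq_nonneg y
      have key : y ^ 2 * (d : ℝ) ^ 2 / 4 * (8 / (d : ℝ)) ≤ y ^ 2 * (d : ℝ) ^ 2 / 4 * (La - Lb) ^ 2 := by
        apply mul_le_mul_of_nonneg_left hL2 (by positivity)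
      have e : y ^ 2 * (d : ℝ) ^ 2 / 4 * (8 / (d : ℝ)) = 2 * ((d : ℝ) * y ^ 2) := by
        field_simp; ring
      rw [e] at key
      linarith
    linarith
  calc Real.exp (-2) * (1 - ρ) ^ d * (d : ℝ) * y ^ 2
      = (Real.exp (-2) * (1 - ρ) ^ d) * ((d : ℝ) * y ^ 2) := by ring
    _ ≤ Real.exp S * Real.cosh θ := by
        apply mul_le_mul hexpS hcosh (by positivity) (le_of_lt (Real.exp_pos S))
end
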